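/- Let κ be a regular cardinal and suppose there exists a (κ,κ⁺)-cardinal μ. Define, for α < κ⁺: A_α = {ξ < κ : ∃ X₁, X₂ ∈ μ with rank(X₁) = rank(X₂) = ξ, X₁ * X₂ ∈ μ, and α ∈ X₁ \ X₂}, and B_α = {ξ < κ : ∃ X₁, X₂ ∈ μ with rank(X₁) = rank(X₂) = ξ, X₁ * X₂ ∈ μ, and α ∈ X₂ \ X₁}. Then: (1) A_α ∩ B_α = ∅ for each α < κ⁺; (2) |A_α \ A_β| < κ and |B_α \ B_β| < κ whenever α < β < κ⁺; (3) there is no C ⊆ κ such that |A_α \ C| < κ and |B_α ∩ C| < κ for all α < κ⁺. (Thus μ explicitly yields a (κ,κ⁺)-Hausdorff gap.) -/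

import Mathlib

open Set Cardinal Ordinal

noncomputable section

/-- Lower a (small) ordinal of `Ordinal.{1}` to `Ordinal.{0}` (the inverse of `Ordinal.lift`
on its range). -/
noncomputable def olower (o : Ordinal.{1}) : Ordinal.{0} :=
  sInf {a : Ordinal.{0} | Ordinal.lift.{1} a = o}

/-- The order type of a set of ordinals. -/
noncomputable def otp (A : Set Ordinal.{0}) : Ordinal.{0} :=
  olower (Ordinal.type (Subrel ((· < ·) : Ordinal → Ordinal → Prop) (· ∈ A)))

/-- The canonical order-preserving transfer map from a set of ordinals `X` to a set of
ordinals `Y` of the same order type: an element `a ∈ X` is sent to the unique element of `Y`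
occupying the same position. -/
noncomputable def omap (X Y : Set Ordinal) (a : Ordinal) : Ordinal :=
  sInf {b | b ∈ Y ∧ otp (Y ∩ Set.Iio b) = otp (X ∩ Set.Iio a)}

/-- `IsStar X₁ X₂ X` says `X = X₁ * X₂`: `X₁` and `X₂` have the same order type,
`X = X₁ ∪ X₂`, and `X₁ ∩ X₂ < X₁ \ X₂ < X₂ \ X₁` elementwise. -/
def IsStar (X₁ X₂ X : Set Ordinal) : Prop :=
  otp X₁ = otp X₂ ∧ X = X₁ ∪ X₂ ∧
  (∀ a ∈ X₁ ∩ X₂, ∀ b ∈ X₁ \ X₂, a < b) ∧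
  (∀ b ∈ X₁ \ X₂, ∀ c ∈ X₂ \ X₁, b < c)

set_option linter.deprecated false in
/-- A `(κ,κ⁺)`-cardinal (a neat simplified `(κ,1)`-morass presented as a family of sets):
a family `μ ⊆ ℘_κ(κ⁺)` which is well-founded under strict inclusion, locally small,
homogeneous, directed, locally almost directed, covers `κ⁺` and is neat. -/
structure TwoCardinal (κ : Cardinal.{0}) where
  mu : Set (Set Ordinal)
  mem_sub : ∀ X ∈ mu, X ⊆ Set.Iio (Order.succ κ).ord
  mem_small : ∀ X ∈ mu, (otp X).card < κ
  wf : WellFounded fun X Y : mu => (X : Set Ordinal) ⊂ (Y : Set Ordinal)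
  locSmall : ∀ X : mu,
    #{Z : mu // (Z : Set Ordinal) ⊂ (X : Set Ordinal)} < Cardinal.lift.{1} κ
  homog : ∀ X Y : mu, (wf.apply X).rank = (wf.apply Y).rank →
    otp (X : Set Ordinal) = otp (Y : Set Ordinal) ∧
    {Z | Z ∈ mu ∧ Z ⊂ (Y : Set Ordinal)} =
      (fun Z => omap (X : Set Ordinal) (Y : Set Ordinal) '' Z) ''
        {Z | Z ∈ mu ∧ Z ⊂ (X : Set Ordinal)}
  directed : ∀ X ∈ mu, ∀ Y ∈ mu, ∃ Z ∈ mu, X ⊆ Z ∧ Y ⊆ Z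
  locAlmostDirected : ∀ X : mu,
    (∀ Z₁ ∈ mu, ∀ Z₂ ∈ mu, Z₁ ⊂ (X : Set Ordinal) → Z₂ ⊂ (X : Set Ordinal) →
      ∃ Z ∈ mu, Z ⊂ (X : Set Ordinal) ∧ Z₁ ⊆ Z ∧ Z₂ ⊆ Z) ∨
    (∃ X₁ X₂ : mu, (wf.apply X₁).rank = (wf.apply X₂).rank ∧
      IsStar (X₁ : Set Ordinal) (X₂ : Set Ordinal) (X : Set Ordinal) ∧
      {Z | Z ∈ mu ∧ Z ⊂ (X : Set Ordinal)} =
        {Z | Z ∈ mu ∧ Z ⊂ (X₁ : Set Ordinal)} ∪ {Z | Z ∈ mu ∧ Z ⊂ (X₂ : Set Ordinal)} ∪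
          {(X₁ : Set Ordinal), (X₂ : Set Ordinal)})
  covers : ⋃₀ mu = Set.Iio (Order.succ κ).ord
  neat : ∀ X : mu, (wf.apply X).rank ≠ 0 →
    (X : Set Ordinal) = ⋃₀ {Z | Z ∈ mu ∧ Z ⊂ (X : Set Ordinal)}

namespace TwoCardinal

variable {κ : Cardinal} (M : TwoCardinal κ)

set_option linter.deprecated false in
/-- The rank of an element of `μ` in the well-founded order `(μ, ⊂)`. -/
noncomputable def rank (X : M.mu) : Ordinal := olower ((M.wf.apply X).rank)

/-- The height of the well-founded order `(μ, ⊂)`. -/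
noncomputable def ht : Ordinal := sSup (Set.range fun X : M.mu => M.rank X + 1)

/-- The term `μ_ξ(α)` of the μ-sequence at `α`: equal to `X ∩ α` for any `X ∈ μ` of
rank `ξ` containing `α` (this is independent of the choice of `X`). -/
noncomputable def seq (α ξ : Ordinal) : Set Ordinal :=
  ⋃₀ {S | ∃ X : M.mu, M.rank X = ξ ∧ α ∈ (X : Set Ordinal) ∧
    S = (X : Set Ordinal) ∩ Set.Iio α}

/-- The μ-coloring `m(α,β) = min{rank X : α, β ∈ X ∈ μ}`. -/
noncomputable def mcol (a b : Ordinal) : Ordinal :=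
  sInf {ξ | ∃ X : M.mu, M.rank X = ξ ∧ a ∈ (X : Set Ordinal) ∧ b ∈ (X : Set Ordinal)}

end TwoCardinal


/-! ### Infrastructure: order types of sets of ordinals -/

section Infra

set_option linter.deprecated false

/-- The rank of an element in a well-founded relation (as in the older Mathlib). -/
noncomputable def WellFounded.rank {α : Type*} {r : α → α → Prop} (hwf : WellFounded r)
    (a : α) : Ordinal := (hwf.apply a).rank

theorem WellFounded.rank_eq {α : Type*} {r : α → α → Prop} (hwf : WellFounded r) (a : α) :
    hwf.rank a = ⨆ b : { b // r b a }, Order.succ (hwf.rank b) :=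
  Acc.rank_eq (hwf.apply a)

theorem WellFounded.rank_lt_of_rel {α : Type*} {r : α → α → Prop} (hwf : WellFounded r)
    {a b : α} (h : r a b) : hwf.rank a < hwf.rank b :=
  Acc.rank_lt_of_rel (hwf.apply b) h

/-- The (universe `1`) order type of a set of ordinals. -/
noncomputable def tS (S : Set Ordinal.{0}) : Ordinal.{1} :=
  Ordinal.type (Subrel ((· < ·) : Ordinal.{0} → Ordinal.{0} → Prop) (· ∈ S))

theorem olower_lift (a : Ordinal.{0}) : olower (Ordinal.lift.{1} a) = a := by
  unfold olower
  have h : {a' : Ordinal.{0} | Ordinal.lift.{1} a' = Ordinal.lift.{1} a} = {a} := by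
    ext x; simp [Ordinal.lift_inj]
  rw [h, csInf_singleton]

theorem otp_def (S : Set Ordinal.{0}) : otp S = olower (tS S) := rfl

theorem tS_le_of_subset {S T : Set Ordinal.{0}} (h : S ⊆ T) : tS S ≤ tS T :=
  Ordinal.type_le_iff'.2 ⟨⟨⟨Set.inclusion h, Set.inclusion_injective h⟩, Iff.rfl⟩⟩

theorem tS_Iio (γ : Ordinal.{0}) : tS (Set.Iio γ) = Ordinal.lift.{1} γ :=
  Ordinal.typein_ordinal γ

/-- Boundedness of a set of ordinals. -/
def Bdd (S : Set Ordinal.{0}) : Prop := ∃ γ, S ⊆ Set.Iio γ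

theorem Bdd.mono {S T : Set Ordinal.{0}} (hT : Bdd T) (h : S ⊆ T) : Bdd S :=
  ⟨hT.choose, h.trans hT.choose_spec⟩

theorem bdd_inter_Iio {S : Set Ordinal.{0}} {a : Ordinal} : Bdd (S ∩ Set.Iio a) :=
  ⟨a, Set.inter_subset_right⟩

theorem lift_otp {S : Set Ordinal.{0}} (h : Bdd S) :
    Ordinal.lift.{1} (otp S) = tS S := by
  obtain ⟨γ, hγ⟩ := h
  have h1 : (tS S) ≤ Ordinal.lift.{1} γ := (tS_Iio γ) ▸ tS_le_of_subset hγ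
  obtain ⟨a, ha⟩ := Ordinal.mem_range_lift_of_le h1
  rw [otp_def, ← ha, olower_lift]

theorem otp_le_otp {S T : Set Ordinal.{0}} (hT : Bdd T) (h : S ⊆ T) : otp S ≤ otp T := by
  rw [← Ordinal.lift_le.{1}, lift_otp (hT.mono h), lift_otp hT]
  exact tS_le_of_subset h

theorem otp_Iio (γ : Ordinal.{0}) : otp (Set.Iio γ) = γ := by
  rw [otp_def, tS_Iio, olower_lift]

theorem card_otp {S : Set Ordinal.{0}} (h : Bdd S) :
    Cardinal.lift.{1} (otp S).card = #S := by
  rw [Ordinal.lift_card, lift_otp h]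
  exact Ordinal.card_type _

/-- The subrelation on `S ∩ Iio a` is isomorphic to the predecessors of `a` in `S`. -/
noncomputable def posIso {S : Set Ordinal.{0}} {a : Ordinal} (ha : a ∈ S) :
    (Subrel ((· < ·) : Ordinal → Ordinal → Prop) (· ∈ S ∩ Set.Iio a)) ≃r
      (Subrel (Subrel ((· < ·) : Ordinal → Ordinal → Prop) (· ∈ S))
        (Subrel ((· < ·) : Ordinal → Ordinal → Prop) (· ∈ S) · ⟨a, ha⟩)) where
  toFun := fun x => ⟨⟨x.1, x.2.1⟩, x.2.2⟩
  invFun := fun x => ⟨x.1.1, ⟨x.1.2, x.2⟩⟩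
  left_inv := fun x => rfl
  right_inv := fun x => rfl
  map_rel_iff' := Iff.rfl

theorem tS_inter_Iio {S : Set Ordinal.{0}} {a : Ordinal} (ha : a ∈ S) :
    tS (S ∩ Set.Iio a) =
      Ordinal.typein (Subrel ((· < ·) : Ordinal → Ordinal → Prop) (· ∈ S)) ⟨a, ha⟩ := by
  rw [← Ordinal.type_subrel]
  exact Ordinal.type_eq.2 ⟨posIso ha⟩

theorem otp_pos_lt {S : Set Ordinal.{0}} {a : Ordinal} (hS : Bdd S) (ha : a ∈ S) :
    otp (S ∩ Set.Iio a) < otp S := by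
  rw [← Ordinal.lift_lt.{1}, lift_otp bdd_inter_Iio, lift_otp hS, tS_inter_Iio ha]
  exact Ordinal.typein_lt_type _ _

theorem otp_pos_strictMono {S : Set Ordinal.{0}} {a b : Ordinal} (ha : a ∈ S) (hb : b ∈ S)
    (hab : a < b) : otp (S ∩ Set.Iio a) < otp (S ∩ Set.Iio b) := by
  have h1 : (S ∩ Set.Iio b) ∩ Set.Iio a = S ∩ Set.Iio a := by
    ext x
    constructor
    · rintro ⟨⟨h1, _⟩, h3⟩; exact ⟨h1, h3⟩
    · rintro ⟨h1, h2⟩; exact ⟨⟨h1, lt_trans h2 hab⟩, h2⟩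
  have := otp_pos_lt (S := S ∩ Set.Iio b) bdd_inter_Iio ⟨ha, hab⟩
  rwa [h1] at this

theorem otp_pos_mono {S : Set Ordinal.{0}} {a b : Ordinal} (ha : a ∈ S) (hb : b ∈ S)
    (hab : a ≤ b) : otp (S ∩ Set.Iio a) ≤ otp (S ∩ Set.Iio b) := by
  rcases eq_or_lt_of_le hab with rfl | h
  · exact le_rfl
  · exact (otp_pos_strictMono ha hb h).le

theorem otp_pos_inj {S : Set Ordinal.{0}} {a b : Ordinal} (ha : a ∈ S) (hb : b ∈ S)
    (h : otp (S ∩ Set.Iio a) = otp (S ∩ Set.Iio b)) : a = b := by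
  rcases lt_trichotomy a b with h1 | h1 | h1
  · exact absurd h (otp_pos_strictMono ha hb h1).ne
  · exact h1
  · exact absurd h.symm (otp_pos_strictMono hb ha h1).ne

theorem otp_enum_exists {S : Set Ordinal.{0}} (hS : Bdd S) {p : Ordinal}
    (hp : p < otp S) : ∃ a ∈ S, otp (S ∩ Set.Iio a) = p := by
  have h1 : Ordinal.lift.{1} p < tS S := by
    rw [← lift_otp hS]; exact Ordinal.lift_lt.2 hp
  set x := Ordinal.enum (Subrel ((· < ·) : Ordinal → Ordinal → Prop) (· ∈ S))
    ⟨Ordinal.lift.{1} p, h1⟩ with hx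
  refine ⟨x.1, x.2, ?_⟩
  have h2 : tS (S ∩ Set.Iio x.1) = Ordinal.lift.{1} p := by
    rw [tS_inter_Iio x.2]
    exact Ordinal.typein_enum (Subrel ((· < ·) : Ordinal → Ordinal → Prop) (· ∈ S)) h1
  rw [← Ordinal.lift_inj.{1}, lift_otp bdd_inter_Iio, h2]

end Infra


/-! ### Properties of `omap` -/

section OmapLemmas

variable {X Y : Set Ordinal.{0}} (hX : Bdd X) (hY : Bdd Y) (hXY : otp X = otp Y)

include hX hY hXY

theorem omap_spec {a : Ordinal} (ha : a ∈ X) :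
    omap X Y a ∈ Y ∧ otp (Y ∩ Set.Iio (omap X Y a)) = otp (X ∩ Set.Iio a) := by
  have hp : otp (X ∩ Set.Iio a) < otp Y := hXY ▸ otp_pos_lt hX ha
  obtain ⟨b, hb, hbp⟩ := otp_enum_exists hY hp
  exact csInf_mem (⟨b, hb, hbp⟩ :
    {b | b ∈ Y ∧ otp (Y ∩ Set.Iio b) = otp (X ∩ Set.Iio a)}.Nonempty)

theorem omap_eq {a b : Ordinal} (ha : a ∈ X) (hb : b ∈ Y)
    (h : otp (Y ∩ Set.Iio b) = otp (X ∩ Set.Iio a)) : omap X Y a = b := by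
  have hset : {c | c ∈ Y ∧ otp (Y ∩ Set.Iio c) = otp (X ∩ Set.Iio a)} = {b} := by
    ext c
    constructor
    · rintro ⟨hc, hcp⟩
      exact otp_pos_inj hc hb (hcp.trans h.symm)
    · rintro rfl
      exact ⟨hb, h⟩
  rw [omap, hset, csInf_singleton]

theorem omap_self {a : Ordinal} (ha : a ∈ X) (ha' : a ∈ Y)
    (h : Y ∩ Set.Iio a = X ∩ Set.Iio a) : omap X Y a = a :=
  omap_eq hX hY hXY ha ha' (by rw [h])

theorem omap_lt {a b : Ordinal} (ha : a ∈ X) (hb : b ∈ X) (hab : a < b) :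
    omap X Y a < omap X Y b := by
  obtain ⟨hmem_a, hpos_a⟩ := omap_spec hX hY hXY ha
  obtain ⟨hmem_b, hpos_b⟩ := omap_spec hX hY hXY hb
  by_contra hle
  push_neg at hle
  have h1 : otp (Y ∩ Set.Iio (omap X Y b)) ≤ otp (Y ∩ Set.Iio (omap X Y a)) :=
    otp_pos_mono hmem_b hmem_a hle
  rw [hpos_a, hpos_b] at h1
  exact absurd h1 (not_le.2 (otp_pos_strictMono ha hb hab))

theorem omap_lt_iff {a b : Ordinal} (ha : a ∈ X) (hb : b ∈ X) :
    omap X Y a < omap X Y b ↔ a < b := by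
  constructor
  · intro h
    rcases lt_trichotomy a b with h1 | h1 | h1
    · exact h1
    · subst h1; exact absurd h (lt_irrefl _)
    · exact absurd (omap_lt hX hY hXY hb ha h1) (asymm h)
  · exact omap_lt hX hY hXY ha hb

theorem omap_injOn : Set.InjOn (omap X Y) X := by
  intro a ha b hb h
  rcases lt_trichotomy a b with h1 | h1 | h1
  · have := omap_lt hX hY hXY ha hb h1
    rw [h] at this
    exact absurd this (lt_irrefl _)
  · exact h1
  · have := omap_lt hX hY hXY hb ha h1
    rw [h] at this
    exact absurd this (lt_irrefl _)

theorem omap_image : omap X Y '' X = Y := by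
  apply Set.Subset.antisymm
  · rintro _ ⟨a, ha, rfl⟩
    exact (omap_spec hX hY hXY ha).1
  · intro b hb
    have hp : otp (Y ∩ Set.Iio b) < otp X := hXY ▸ otp_pos_lt hY hb
    obtain ⟨a, ha, hap⟩ := otp_enum_exists hX hp
    exact ⟨a, ha, omap_eq hX hY hXY ha hb (by rw [hap])⟩

theorem omap_image_inter_Iio {a : Ordinal} (ha : a ∈ X) :
    omap X Y '' (X ∩ Set.Iio a) = Y ∩ Set.Iio (omap X Y a) := by
  apply Set.Subset.antisymm
  · rintro _ ⟨x, ⟨hx, hxa⟩, rfl⟩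
    exact ⟨(omap_spec hX hY hXY hx).1, omap_lt hX hY hXY hx ha hxa⟩
  · rintro b ⟨hbY, hblt⟩
    have : b ∈ omap X Y '' X := (omap_image hX hY hXY).symm ▸ hbY
    obtain ⟨x, hx, rfl⟩ := this
    exact ⟨x, ⟨hx, (omap_lt_iff hX hY hXY hx ha).1 hblt⟩, rfl⟩

theorem otp_omap_image {Z : Set Ordinal.{0}} (hZ : Z ⊆ X) :
    otp (omap X Y '' Z) = otp Z := by
  rw [otp_def, otp_def]
  congr 1
  refine (Ordinal.type_eq.2 ⟨?_⟩).symm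
  refine ⟨Equiv.Set.imageOfInjOn (omap X Y) Z ((omap_injOn hX hY hXY).mono hZ), ?_⟩
  rintro ⟨x, hx⟩ ⟨y, hy⟩
  show omap X Y x < omap X Y y ↔ x < y
  exact omap_lt_iff hX hY hXY (hZ hx) (hZ hy)

end OmapLemmas


/-! ### Rank lemmas for a two-cardinal -/

namespace TwoCardinal

section RankLemmas

set_option linter.deprecated false

variable {κ : Cardinal.{0}} (M : TwoCardinal κ)

theorem bdd_mem {X : Set Ordinal} (hX : X ∈ M.mu) : Bdd X :=
  ⟨(Order.succ κ).ord, M.mem_sub X hX⟩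

theorem bdd_coe (X : M.mu) : Bdd (X : Set Ordinal) := M.bdd_mem X.2

theorem wfRank_lt_of_ssubset {X Y : M.mu} (h : (X : Set Ordinal) ⊂ (Y : Set Ordinal)) :
    M.wf.rank X < M.wf.rank Y := M.wf.rank_lt_of_rel h

theorem wfRank_le_of_subset {X Y : M.mu} (h : (X : Set Ordinal) ⊆ (Y : Set Ordinal)) :
    M.wf.rank X ≤ M.wf.rank Y := by
  rcases h.ssubset_or_eq with h1 | h1
  · exact (M.wfRank_lt_of_ssubset h1).le
  · rw [Subtype.ext h1]

theorem eq_of_subset_of_wfRank_le {X Y : M.mu} (h : (X : Set Ordinal) ⊆ (Y : Set Ordinal))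
    (hr : M.wf.rank Y ≤ M.wf.rank X) : X = Y := by
  rcases h.ssubset_or_eq with h1 | h1
  · exact absurd (M.wfRank_lt_of_ssubset h1) (not_lt.2 hr)
  · exact Subtype.ext h1

theorem lift_isRegular (hκ : κ.IsRegular) : (Cardinal.lift.{1} κ).IsRegular := by
  constructor
  · exact Cardinal.aleph0_le_lift.2 hκ.1
  · rw [← Cardinal.lift_ord, ← Ordinal.lift_cof]
    exact Cardinal.lift_le.2 hκ.2

theorem wfRank_lt_ord (hκ : κ.IsRegular) (X : M.mu) :
    M.wf.rank X < (Cardinal.lift.{1} κ).ord := by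
  induction X using M.wf.induction with
  | _ X IH =>
    rw [M.wf.rank_eq]
    apply Ordinal.iSup_lt_ord
    · rw [(lift_isRegular hκ).cof_eq]
      exact M.locSmall X
    · rintro ⟨Y, hY⟩
      exact (Cardinal.isSuccLimit_ord (lift_isRegular hκ).aleph0_le).succ_lt (IH Y hY)

theorem lift_rank (hκ : κ.IsRegular) (X : M.mu) :
    Ordinal.lift.{1} (M.rank X) = M.wf.rank X := by
  have h1 : M.wf.rank X ≤ Ordinal.lift.{1} κ.ord := by
    rw [Cardinal.lift_ord]
    exact (M.wfRank_lt_ord hκ X).le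
  obtain ⟨a, ha⟩ := Ordinal.mem_range_lift_of_le h1
  rw [TwoCardinal.rank, show (M.wf.apply X).rank = M.wf.rank X from rfl, ← ha, olower_lift]

theorem rank_lt_ord (hκ : κ.IsRegular) (X : M.mu) : M.rank X < κ.ord := by
  rw [← Ordinal.lift_lt.{1}, M.lift_rank hκ, Cardinal.lift_ord]
  exact M.wfRank_lt_ord hκ X

theorem rank_eq_iff (hκ : κ.IsRegular) {X Y : M.mu} :
    M.rank X = M.rank Y ↔ M.wf.rank X = M.wf.rank Y := by
  rw [← M.lift_rank hκ, ← M.lift_rank hκ, Ordinal.lift_inj]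

theorem rank_le_iff (hκ : κ.IsRegular) {X Y : M.mu} :
    M.rank X ≤ M.rank Y ↔ M.wf.rank X ≤ M.wf.rank Y := by
  rw [← M.lift_rank hκ, ← M.lift_rank hκ, Ordinal.lift_le]

theorem otp_eq_of_rank_eq {X Y : M.mu} (h : M.wf.rank X = M.wf.rank Y) :
    otp (X : Set Ordinal) = otp (Y : Set Ordinal) := (M.homog X Y h).1

end RankLemmas

end TwoCardinal


/-! ### Star lemmas -/

section StarLemmas

variable {X₁ X₂ X : Set Ordinal.{0}}

theorem IsStar.inter_lt_diff2 (h : IsStar X₁ X₂ X) (hd1 : (X₁ \ X₂).Nonempty) :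
    ∀ a ∈ X₁ ∩ X₂, ∀ c ∈ X₂ \ X₁, a < c := by
  rintro a ha c hc
  obtain ⟨b, hb⟩ := hd1
  exact lt_trans (h.2.2.1 a ha b hb) (h.2.2.2 b hb c hc)

theorem IsStar.init₁ (h : IsStar X₁ X₂ X) {γ : Ordinal} (hγ : γ ∈ X₁ ∩ X₂) :
    X₁ ∩ Set.Iio γ = (X₁ ∩ X₂) ∩ Set.Iio γ := by
  ext x
  constructor
  · rintro ⟨hx, hlt⟩
    by_cases hx2 : x ∈ X₂
    · exact ⟨⟨hx, hx2⟩, hlt⟩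
    · exact absurd (h.2.2.1 γ hγ x ⟨hx, hx2⟩) (not_lt.2 hlt.le)
  · rintro ⟨hx, hlt⟩
    exact ⟨hx.1, hlt⟩

theorem IsStar.init₂ (h : IsStar X₁ X₂ X) (hd1 : (X₁ \ X₂).Nonempty) {γ : Ordinal}
    (hγ : γ ∈ X₁ ∩ X₂) : X₂ ∩ Set.Iio γ = (X₁ ∩ X₂) ∩ Set.Iio γ := by
  ext x
  constructor
  · rintro ⟨hx, hlt⟩
    by_cases hx1 : x ∈ X₁
    · exact ⟨⟨hx1, hx⟩, hlt⟩
    · exact absurd (h.inter_lt_diff2 hd1 γ hγ x ⟨hx, hx1⟩) (not_lt.2 hlt.le)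
  · rintro ⟨hx, hlt⟩
    exact ⟨hx.2, hlt⟩

theorem IsStar.init_eq (h : IsStar X₁ X₂ X) (hd1 : (X₁ \ X₂).Nonempty) {γ : Ordinal}
    (hγ : γ ∈ X₁ ∩ X₂) : X₂ ∩ Set.Iio γ = X₁ ∩ Set.Iio γ := by
  rw [h.init₁ hγ, h.init₂ hd1 hγ]

theorem IsStar.mem_inter_lt (h : IsStar X₁ X₂ X) {γ x : Ordinal} (hγ : γ ∈ X₁ ∩ X₂)
    (hx : x ∈ X₁) (hlt : x < γ) : x ∈ X₁ ∩ X₂ := by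
  have := h.init₁ hγ
  have hmem : x ∈ X₁ ∩ Set.Iio γ := ⟨hx, hlt⟩
  rw [this] at hmem
  exact hmem.1

/-- The image of a star under an order transfer map is a star. -/
theorem IsStar.image {V₁ V₂ : Set Ordinal.{0}} (hb1 : Bdd V₁) (hb2 : Bdd V₂)
    (hotp : otp V₁ = otp V₂) (h1 : X₁ ⊆ V₁) (h2 : X₂ ⊆ V₁) (hX : X ⊆ V₁)
    (hstar : IsStar X₁ X₂ X) :
    IsStar (omap V₁ V₂ '' X₁) (omap V₁ V₂ '' X₂) (omap V₁ V₂ '' X) := by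
  have hinj := omap_injOn hb1 hb2 hotp
  have hmono : ∀ {a b : Ordinal}, a ∈ V₁ → b ∈ V₁ →
      (omap V₁ V₂ a < omap V₁ V₂ b ↔ a < b) := fun ha hb => omap_lt_iff hb1 hb2 hotp ha hb
  have hmem₂ : ∀ {b : Ordinal}, b ∈ V₁ → (omap V₁ V₂ b ∈ omap V₁ V₂ '' X₂ ↔ b ∈ X₂) := by
    intro b hb
    constructor
    · rintro ⟨c, hc, hcb⟩
      rwa [← hinj (h2 hc) hb hcb]
    · intro hb2'
      exact ⟨b, hb2', rfl⟩
  have hmem₁ : ∀ {b : Ordinal}, b ∈ V₁ → (omap V₁ V₂ b ∈ omap V₁ V₂ '' X₁ ↔ b ∈ X₁) := by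
    intro b hb
    constructor
    · rintro ⟨c, hc, hcb⟩
      rwa [← hinj (h1 hc) hb hcb]
    · intro hb1'
      exact ⟨b, hb1', rfl⟩
  refine ⟨?_, ?_, ?_, ?_⟩
  · rw [otp_omap_image hb1 hb2 hotp h1, otp_omap_image hb1 hb2 hotp h2]
    exact hstar.1
  · rw [hstar.2.1, Set.image_union]
  · rintro a ⟨⟨a₁, ha₁, rfl⟩, ha₂⟩ b ⟨⟨b₁, hb₁, rfl⟩, hb₂⟩
    have ha₁2 : a₁ ∈ X₂ := (hmem₂ (h1 ha₁)).1 ha₂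
    have hb₁2 : b₁ ∉ X₂ := fun hc => hb₂ ((hmem₂ (h1 hb₁)).2 hc)
    exact (hmono (h1 ha₁) (h1 hb₁)).2 (hstar.2.2.1 a₁ ⟨ha₁, ha₁2⟩ b₁ ⟨hb₁, hb₁2⟩)
  · rintro a ⟨⟨a₁, ha₁, rfl⟩, ha₂⟩ b ⟨⟨b₁, hb₁, rfl⟩, hb₂⟩
    have ha₁2 : a₁ ∉ X₂ := fun hc => ha₂ ((hmem₂ (h1 ha₁)).2 hc)
    have hb₁2 : b₁ ∉ X₁ := fun hc => hb₂ ((hmem₁ (h2 hb₁)).2 hc)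
    exact (hmono (h1 ha₁) (h2 hb₁)).2 (hstar.2.2.2 a₁ ⟨ha₁, ha₁2⟩ b₁ ⟨hb₁, hb₁2⟩)

end StarLemmas

namespace TwoCardinal

section SplitLemmas

set_option linter.deprecated false

variable {κ : Cardinal.{0}} (M : TwoCardinal κ)

/-- The hypothesis package of the split case of local almost-directedness. -/
def SplitAt (V X₁ X₂ : M.mu) : Prop :=
  M.wf.rank X₁ = M.wf.rank X₂ ∧
  IsStar (X₁ : Set Ordinal) (X₂ : Set Ordinal) (V : Set Ordinal) ∧
  {Z | Z ∈ M.mu ∧ Z ⊂ (V : Set Ordinal)} =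
    {Z | Z ∈ M.mu ∧ Z ⊂ (X₁ : Set Ordinal)} ∪ {Z | Z ∈ M.mu ∧ Z ⊂ (X₂ : Set Ordinal)} ∪
      {(X₁ : Set Ordinal), (X₂ : Set Ordinal)}

variable {M}

theorem SplitAt.ssub₁ {V X₁ X₂ : M.mu} (h : M.SplitAt V X₁ X₂) :
    (X₁ : Set Ordinal) ⊂ (V : Set Ordinal) := by
  have : (X₁ : Set Ordinal) ∈ {Z | Z ∈ M.mu ∧ Z ⊂ (V : Set Ordinal)} := by
    rw [h.2.2]
    exact Or.inr (Set.mem_insert _ _)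
  exact this.2

theorem SplitAt.ssub₂ {V X₁ X₂ : M.mu} (h : M.SplitAt V X₁ X₂) :
    (X₂ : Set Ordinal) ⊂ (V : Set Ordinal) := by
  have : (X₂ : Set Ordinal) ∈ {Z | Z ∈ M.mu ∧ Z ⊂ (V : Set Ordinal)} := by
    rw [h.2.2]
    exact Or.inr (Set.mem_insert_of_mem _ rfl)
  exact this.2

theorem SplitAt.ne {V X₁ X₂ : M.mu} (h : M.SplitAt V X₁ X₂) :
    (X₁ : Set Ordinal) ≠ (X₂ : Set Ordinal) := by
  intro he
  have hV : (V : Set Ordinal) = (X₁ : Set Ordinal) := by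
    rw [h.2.1.2.1, ← he, Set.union_self]
  exact h.ssub₁.ne (hV.symm)

/-- In a star between distinct same-rank sets, both differences are nonempty. -/
theorem star_diff_nonempty {X₁ X₂ : M.mu} (hr : M.wf.rank X₁ = M.wf.rank X₂)
    (hne : (X₁ : Set Ordinal) ≠ (X₂ : Set Ordinal)) :
    ((X₁ : Set Ordinal) \ (X₂ : Set Ordinal)).Nonempty ∧
      ((X₂ : Set Ordinal) \ (X₁ : Set Ordinal)).Nonempty := by
  constructor
  · rw [Set.nonempty_iff_ne_empty]
    intro he
    have hsub : (X₁ : Set Ordinal) ⊆ (X₂ : Set Ordinal) := Set.diff_eq_empty.1 he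
    exact hne (congrArg _ (M.eq_of_subset_of_wfRank_le hsub hr.ge))
  · rw [Set.nonempty_iff_ne_empty]
    intro he
    have hsub : (X₂ : Set Ordinal) ⊆ (X₁ : Set Ordinal) := Set.diff_eq_empty.1 he
    exact hne (congrArg _ (M.eq_of_subset_of_wfRank_le hsub hr.le)).symm

theorem SplitAt.d1 {V X₁ X₂ : M.mu} (h : M.SplitAt V X₁ X₂) :
    ((X₁ : Set Ordinal) \ (X₂ : Set Ordinal)).Nonempty :=
  (star_diff_nonempty h.1 h.ne).1

theorem SplitAt.d2 {V X₁ X₂ : M.mu} (h : M.SplitAt V X₁ X₂) :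
    ((X₂ : Set Ordinal) \ (X₁ : Set Ordinal)).Nonempty :=
  (star_diff_nonempty h.1 h.ne).2

/-- The rank of a split point is the successor of the ranks of its two halves. -/
theorem SplitAt.rank_eq {V X₁ X₂ : M.mu} (h : M.SplitAt V X₁ X₂) :
    M.wf.rank V = M.wf.rank X₁ + 1 := by
  apply le_antisymm
  · rw [M.wf.rank_eq]
    apply Ordinal.iSup_le
    rintro ⟨Z, hZ⟩
    rw [Ordinal.add_one_eq_succ]
    apply Order.succ_le_succ
    have hmem : (Z : Set Ordinal) ∈ {Z | Z ∈ M.mu ∧ Z ⊂ (V : Set Ordinal)} := ⟨Z.2, hZ⟩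
    rw [h.2.2] at hmem
    rcases hmem with (hmem | hmem) | hmem
    · exact (M.wfRank_lt_of_ssubset (X := Z) (Y := X₁) hmem.2).le
    · exact le_of_le_of_eq (M.wfRank_lt_of_ssubset (X := Z) (Y := X₂) hmem.2).le h.1.symm
    · rcases hmem with hmem | hmem
      · exact le_of_eq (congrArg M.wf.rank (Subtype.ext hmem))
      · rw [congrArg M.wf.rank (Subtype.ext hmem), h.1]
  · rw [Ordinal.add_one_eq_succ, Order.succ_le_iff]
    exact M.wfRank_lt_of_ssubset h.ssub₁

/-- Uniqueness of star decompositions: any star decomposition into same-rank members of `μ`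
coincides with the canonical split. -/
theorem star_eq_split {V X₁ X₂ V₁ V₂ : M.mu} (hr : M.wf.rank X₁ = M.wf.rank X₂)
    (hstar : IsStar (X₁ : Set Ordinal) (X₂ : Set Ordinal) (V : Set Ordinal))
    (hne : (X₁ : Set Ordinal) ≠ (X₂ : Set Ordinal)) (hsp : M.SplitAt V V₁ V₂) :
    X₁ = V₁ ∧ X₂ = V₂ := by
  obtain ⟨hd1, hd2⟩ := star_diff_nonempty hr hne
  have hd1' := hsp.d1
  have hd2' := hsp.d2
  have hX₁V : (X₁ : Set Ordinal) ⊂ (V : Set Ordinal) := by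
    refine ⟨hstar.2.1 ▸ Set.subset_union_left, fun hsub => ?_⟩
    have hX₂X₁ : (X₂ : Set Ordinal) ⊆ (X₁ : Set Ordinal) := fun x hx =>
      hsub (hstar.2.1 ▸ Set.subset_union_right hx)
    exact hne (congrArg _ (M.eq_of_subset_of_wfRank_le hX₂X₁ hr.le)).symm
  have hX₂V : (X₂ : Set Ordinal) ⊂ (V : Set Ordinal) := by
    refine ⟨hstar.2.1 ▸ Set.subset_union_right, fun hsub => ?_⟩
    have hX₁X₂ : (X₁ : Set Ordinal) ⊆ (X₂ : Set Ordinal) := fun x hx =>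
      hsub (hstar.2.1 ▸ Set.subset_union_left hx)
    exact hne (congrArg _ (M.eq_of_subset_of_wfRank_le hX₁X₂ hr.ge))
  -- each of X₁, X₂ lies inside V₁ or V₂
  have hplace : ∀ Y : M.mu, (Y : Set Ordinal) ⊂ (V : Set Ordinal) →
      (Y : Set Ordinal) ⊆ (V₁ : Set Ordinal) ∨ (Y : Set Ordinal) ⊆ (V₂ : Set Ordinal) := by
    intro Y hY
    have hmem : (Y : Set Ordinal) ∈ {Z | Z ∈ M.mu ∧ Z ⊂ (V : Set Ordinal)} := ⟨Y.2, hY⟩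
    rw [hsp.2.2] at hmem
    rcases hmem with (hmem | hmem) | hmem
    · exact Or.inl hmem.2.1
    · exact Or.inr hmem.2.1
    · rcases hmem with hmem | hmem
      · exact Or.inl (le_of_eq hmem)
      · exact Or.inr (le_of_eq hmem)
  have hnotboth : ∀ i : M.mu, (X₁ : Set Ordinal) ⊆ (i : Set Ordinal) →
      (X₂ : Set Ordinal) ⊆ (i : Set Ordinal) → (i : Set Ordinal) ⊂ (V : Set Ordinal) → False := by
    intro i h1 h2 hi
    have : (V : Set Ordinal) ⊆ (i : Set Ordinal) := by
      rw [hstar.2.1]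
      exact Set.union_subset h1 h2
    exact hi.2 this
  -- rule out the crossed case X₁ ⊆ V₂, X₂ ⊆ V₁
  have hcross : (X₁ : Set Ordinal) ⊆ (V₂ : Set Ordinal) →
      (X₂ : Set Ordinal) ⊆ (V₁ : Set Ordinal) → False := by
    intro h1 h2
    -- every element of X₁ \ X₂ is in V₁ ∩ V₂
    have hstep : ∀ a ∈ (X₁ : Set Ordinal) \ (X₂ : Set Ordinal),
        a ∈ (V₁ : Set Ordinal) ∩ (V₂ : Set Ordinal) := by
      intro a ha
      refine ⟨?_, h1 ha.1⟩
      by_contra haV₁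
      obtain ⟨b, hb⟩ := hd2
      have hab : a < b := hstar.2.2.2 a ha b hb
      have hbV₁ : b ∈ (V₁ : Set Ordinal) := h2 hb.1
      by_cases hbV₂ : b ∈ (V₂ : Set Ordinal)
      · exact absurd (hsp.2.1.inter_lt_diff2 hd1' b ⟨hbV₁, hbV₂⟩ a ⟨h1 ha.1, haV₁⟩)
          (not_lt.2 hab.le)
      · exact absurd (hsp.2.1.2.2.2 b ⟨hbV₁, hbV₂⟩ a ⟨h1 ha.1, haV₁⟩) (not_lt.2 hab.le)
    have hX₁V₁ : (X₁ : Set Ordinal) ⊆ (V₁ : Set Ordinal) := by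
      intro x hx
      by_cases hx2 : x ∈ (X₂ : Set Ordinal)
      · exact h2 hx2
      · exact (hstep x ⟨hx, hx2⟩).1
    exact hnotboth V₁ hX₁V₁ h2 hsp.ssub₁
  -- hence the aligned case holds
  have haligned : (X₁ : Set Ordinal) ⊆ (V₁ : Set Ordinal) ∧
      (X₂ : Set Ordinal) ⊆ (V₂ : Set Ordinal) := by
    rcases hplace X₁ hX₁V with h1 | h1
    · rcases hplace X₂ hX₂V with h2 | h2
      · exact (hnotboth V₁ h1 h2 hsp.ssub₁).elim
      · exact ⟨h1, h2⟩
    · rcases hplace X₂ hX₂V with h2 | h2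
      · exact (hcross h1 h2).elim
      · exact (hnotboth V₂ h1 h2 hsp.ssub₂).elim
  obtain ⟨h1, h2⟩ := haligned
  -- show X₁ = V₁
  have hX₁eq : (X₁ : Set Ordinal) = (V₁ : Set Ordinal) := by
    by_contra hneq
    obtain ⟨c, hcV₁, hcX₁⟩ := Set.exists_of_ssubset ⟨h1, fun hsub => hneq (le_antisymm h1 hsub)⟩
    have hcX₂ : c ∈ (X₂ : Set Ordinal) := by
      have hcV : c ∈ (V : Set Ordinal) := hsp.2.1.2.1 ▸ Set.subset_union_left hcV₁
      rw [hstar.2.1] at hcV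
      rcases hcV with hc | hc
      · exact absurd hc hcX₁
      · exact hc
    -- all of X₁ is below c
    have hbelow : ∀ x ∈ (X₁ : Set Ordinal), x < c := by
      intro x hx
      by_cases hx2 : x ∈ (X₂ : Set Ordinal)
      · exact hstar.inter_lt_diff2 hd1 x ⟨hx, hx2⟩ c ⟨hcX₂, hcX₁⟩
      · exact hstar.2.2.2 x ⟨hx, hx2⟩ c ⟨hcX₂, hcX₁⟩
    -- c is in V₁ ∩ V₂, so below all of V₁ \ V₂
    have hcV₂ : c ∈ (V₂ : Set Ordinal) := h2 hcX₂
    have hX₁subV₂ : (X₁ : Set Ordinal) ⊆ (V₂ : Set Ordinal) := by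
      intro x hx
      by_cases hxV₂ : x ∈ (V₂ : Set Ordinal)
      · exact hxV₂
      · exact absurd (hsp.2.1.2.2.1 c ⟨hcV₁, hcV₂⟩ x ⟨h1 hx, hxV₂⟩)
          (not_lt.2 (hbelow x hx).le)
    exact hnotboth V₂ hX₁subV₂ h2 hsp.ssub₂
  have hX₁ : X₁ = V₁ := Subtype.ext hX₁eq
  refine ⟨hX₁, ?_⟩
  apply M.eq_of_subset_of_wfRank_le h2
  rw [← hsp.1, ← hX₁, ← hr]

/-- A star decomposition into distinct same-rank members of `μ` is the canonical split. -/
theorem split_of_star {V X₁ X₂ : M.mu} (hr : M.wf.rank X₁ = M.wf.rank X₂)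
    (hstar : IsStar (X₁ : Set Ordinal) (X₂ : Set Ordinal) (V : Set Ordinal))
    (hne : (X₁ : Set Ordinal) ≠ (X₂ : Set Ordinal)) : M.SplitAt V X₁ X₂ := by
  rcases M.locAlmostDirected V with had | ⟨V₁, V₂, hr', hstar', hcone'⟩
  · exfalso
    have hX₁V : (X₁ : Set Ordinal) ⊂ (V : Set Ordinal) := by
      refine ⟨hstar.2.1 ▸ Set.subset_union_left, fun hsub => ?_⟩
      have hX₂X₁ : (X₂ : Set Ordinal) ⊆ (X₁ : Set Ordinal) := fun x hx =>
        hsub (hstar.2.1 ▸ Set.subset_union_right hx)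
      exact hne (congrArg _ (M.eq_of_subset_of_wfRank_le hX₂X₁ hr.le)).symm
    have hX₂V : (X₂ : Set Ordinal) ⊂ (V : Set Ordinal) := by
      refine ⟨hstar.2.1 ▸ Set.subset_union_right, fun hsub => ?_⟩
      have hX₁X₂ : (X₁ : Set Ordinal) ⊆ (X₂ : Set Ordinal) := fun x hx =>
        hsub (hstar.2.1 ▸ Set.subset_union_left hx)
      exact hne (congrArg _ (M.eq_of_subset_of_wfRank_le hX₁X₂ hr.ge))
    obtain ⟨Z, _, hZV, hZ1, hZ2⟩ := had X₁ X₁.2 X₂ X₂.2 hX₁V hX₂V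
    exact hZV.2 (hstar.2.1 ▸ Set.union_subset hZ1 hZ2)
  · have hsp : M.SplitAt V V₁ V₂ := ⟨hr', hstar', hcone'⟩
    obtain ⟨h1, h2⟩ := star_eq_split hr hstar hne hsp
    rw [h1, h2]
    exact hsp

end SplitLemmas

end TwoCardinal


/-! ### Image and coherence lemmas -/

namespace TwoCardinal

section ImageLemmas

set_option linter.deprecated false

variable {κ : Cardinal.{0}} {M : TwoCardinal κ}

theorem image_cone_mem {V₁ V₂ : M.mu} (hrV : M.wf.rank V₁ = M.wf.rank V₂) {Z : Set Ordinal}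
    (hZmem : Z ∈ M.mu) (hZ : Z ⊂ (V₁ : Set Ordinal)) :
    omap (V₁ : Set Ordinal) (V₂ : Set Ordinal) '' Z ∈ M.mu ∧
      omap (V₁ : Set Ordinal) (V₂ : Set Ordinal) '' Z ⊂ (V₂ : Set Ordinal) := by
  have h := (M.homog V₁ V₂ hrV).2
  have hmem : omap (V₁ : Set Ordinal) (V₂ : Set Ordinal) '' Z ∈
      {Z | Z ∈ M.mu ∧ Z ⊂ (V₂ : Set Ordinal)} := by
    rw [h]
    exact ⟨Z, ⟨hZmem, hZ⟩, rfl⟩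
  exact hmem

theorem cone_mem_image {V₁ V₂ : M.mu} (hrV : M.wf.rank V₁ = M.wf.rank V₂) {P : Set Ordinal}
    (hP : P ∈ M.mu) (hPV : P ⊂ (V₂ : Set Ordinal)) :
    ∃ Q : Set Ordinal, Q ∈ M.mu ∧ Q ⊂ (V₁ : Set Ordinal) ∧
      P = omap (V₁ : Set Ordinal) (V₂ : Set Ordinal) '' Q := by
  have h := (M.homog V₁ V₂ hrV).2
  have hmem : P ∈ (fun Z => omap (V₁ : Set Ordinal) (V₂ : Set Ordinal) '' Z) ''
      {Z | Z ∈ M.mu ∧ Z ⊂ (V₁ : Set Ordinal)} := by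
    rw [← h]
    exact ⟨hP, hPV⟩
  obtain ⟨Q, hQ, hQP⟩ := hmem
  exact ⟨Q, hQ.1, hQ.2, hQP.symm⟩

theorem image_subset_iff_of_rank {V₁ V₂ : M.mu} (hrV : M.wf.rank V₁ = M.wf.rank V₂)
    {A B : Set Ordinal} (hA : A ⊆ (V₁ : Set Ordinal)) (hB : B ⊆ (V₁ : Set Ordinal)) :
    omap (V₁ : Set Ordinal) (V₂ : Set Ordinal) '' A ⊆
      omap (V₁ : Set Ordinal) (V₂ : Set Ordinal) '' B ↔ A ⊆ B := by
  have hinj := omap_injOn (M.bdd_coe V₁) (M.bdd_coe V₂) (M.otp_eq_of_rank_eq hrV)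
  constructor
  · intro h x hx
    obtain ⟨y, hy, hxy⟩ := h ⟨x, hx, rfl⟩
    rwa [← hinj (hB hy) (hA hx) hxy]
  · exact Set.image_mono

theorem image_ssubset_iff_of_rank {V₁ V₂ : M.mu} (hrV : M.wf.rank V₁ = M.wf.rank V₂)
    {A B : Set Ordinal} (hA : A ⊆ (V₁ : Set Ordinal)) (hB : B ⊆ (V₁ : Set Ordinal)) :
    omap (V₁ : Set Ordinal) (V₂ : Set Ordinal) '' A ⊂
      omap (V₁ : Set Ordinal) (V₂ : Set Ordinal) '' B ↔ A ⊂ B := by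
  rw [Set.ssubset_def, Set.ssubset_def, image_subset_iff_of_rank hrV hA hB,
    image_subset_iff_of_rank hrV hB hA]

/-- The transfer map between same-rank members of `μ` preserves ranks of members
of their cones. -/
theorem image_rank {V₁ V₂ : M.mu} (hrV : M.wf.rank V₁ = M.wf.rank V₂) :
    ∀ Z : M.mu, (Z : Set Ordinal) ⊂ (V₁ : Set Ordinal) → ∀ W : M.mu,
      (W : Set Ordinal) = omap (V₁ : Set Ordinal) (V₂ : Set Ordinal) '' (Z : Set Ordinal) →
      M.wf.rank W = M.wf.rank Z := by
  intro Z
  induction Z using M.wf.induction with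
  | _ Z IH =>
    intro hZ W hW
    have hWV₂ : (W : Set Ordinal) ⊂ (V₂ : Set Ordinal) := by
      rw [hW]
      exact (image_cone_mem hrV Z.2 hZ).2
    apply le_antisymm
    · conv_lhs => rw [M.wf.rank_eq]
      apply Ordinal.iSup_le
      rintro ⟨⟨P, hPmem⟩, hP⟩
      have hPV₂ : P ⊂ (V₂ : Set Ordinal) := hP.trans hWV₂
      obtain ⟨Q, hQmem, hQV₁, hPQ⟩ := cone_mem_image hrV hPmem hPV₂
      have hQZ : Q ⊂ (Z : Set Ordinal) := by
        rw [← image_ssubset_iff_of_rank hrV hQV₁.1 hZ.1, ← hPQ, ← hW]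
        exact hP
      have hrank : M.wf.rank ⟨P, hPmem⟩ = M.wf.rank ⟨Q, hQmem⟩ :=
        IH ⟨Q, hQmem⟩ hQZ hQV₁ ⟨P, hPmem⟩ hPQ
      rw [Order.succ_le_iff, hrank]
      exact M.wfRank_lt_of_ssubset (X := ⟨Q, hQmem⟩) (Y := Z) hQZ
    · conv_lhs => rw [M.wf.rank_eq]
      apply Ordinal.iSup_le
      rintro ⟨⟨Q, hQmem⟩, hQ⟩
      have hQV₁ : Q ⊂ (V₁ : Set Ordinal) := hQ.trans hZ
      obtain ⟨hPmem, _⟩ := image_cone_mem hrV hQmem hQV₁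
      have hrank : M.wf.rank ⟨omap (V₁ : Set Ordinal) (V₂ : Set Ordinal) '' Q, hPmem⟩ =
          M.wf.rank ⟨Q, hQmem⟩ := IH ⟨Q, hQmem⟩ hQ hQV₁ _ rfl
      have hPW : (omap (V₁ : Set Ordinal) (V₂ : Set Ordinal) '' Q) ⊂ (W : Set Ordinal) := by
        rw [hW]
        exact (image_ssubset_iff_of_rank hrV hQV₁.1 hZ.1).2 hQ
      rw [Order.succ_le_iff, ← hrank]
      exact M.wfRank_lt_of_ssubset
        (X := ⟨omap (V₁ : Set Ordinal) (V₂ : Set Ordinal) '' Q, hPmem⟩) (Y := W) hPW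

theorem SplitAt.otp_eq {V V₁ V₂ : M.mu} (hsp : M.SplitAt V V₁ V₂) :
    otp (V₁ : Set Ordinal) = otp (V₂ : Set Ordinal) := M.otp_eq_of_rank_eq hsp.1

theorem SplitAt.omap_fix {V V₁ V₂ : M.mu} (hsp : M.SplitAt V V₁ V₂) {γ : Ordinal}
    (hγ : γ ∈ (V₁ : Set Ordinal) ∩ (V₂ : Set Ordinal)) :
    omap (V₁ : Set Ordinal) (V₂ : Set Ordinal) γ = γ :=
  omap_self (M.bdd_coe V₁) (M.bdd_coe V₂) hsp.otp_eq hγ.1 hγ.2 (hsp.2.1.init_eq hsp.d1 hγ)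

theorem SplitAt.omap_fix' {V V₁ V₂ : M.mu} (hsp : M.SplitAt V V₁ V₂) {γ : Ordinal}
    (hγ : γ ∈ (V₁ : Set Ordinal) ∩ (V₂ : Set Ordinal)) :
    omap (V₂ : Set Ordinal) (V₁ : Set Ordinal) γ = γ :=
  omap_self (M.bdd_coe V₂) (M.bdd_coe V₁) hsp.otp_eq.symm hγ.2 hγ.1
    (hsp.2.1.init_eq hsp.d1 hγ).symm

/-- Initial segments below a common point of the two halves of a split agree with the
intersection. -/
theorem SplitAt.init₁ {V V₁ V₂ : M.mu} (hsp : M.SplitAt V V₁ V₂) {γ : Ordinal}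
    (hγ : γ ∈ (V₁ : Set Ordinal) ∩ (V₂ : Set Ordinal)) :
    (V₁ : Set Ordinal) ∩ Set.Iio γ = ((V₁ : Set Ordinal) ∩ (V₂ : Set Ordinal)) ∩ Set.Iio γ :=
  hsp.2.1.init₁ hγ

theorem SplitAt.init₂ {V V₁ V₂ : M.mu} (hsp : M.SplitAt V V₁ V₂) {γ : Ordinal}
    (hγ : γ ∈ (V₁ : Set Ordinal) ∩ (V₂ : Set Ordinal)) :
    (V₂ : Set Ordinal) ∩ Set.Iio γ = ((V₁ : Set Ordinal) ∩ (V₂ : Set Ordinal)) ∩ Set.Iio γ :=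
  hsp.2.1.init₂ hsp.d1 hγ

/-- Placement: every member of the cone of a split point lies in one of its halves. -/
theorem SplitAt.place {V V₁ V₂ : M.mu} (hsp : M.SplitAt V V₁ V₂) {Y : M.mu}
    (hY : (Y : Set Ordinal) ⊂ (V : Set Ordinal)) :
    (Y : Set Ordinal) ⊆ (V₁ : Set Ordinal) ∨ (Y : Set Ordinal) ⊆ (V₂ : Set Ordinal) := by
  have hmem : (Y : Set Ordinal) ∈ {Z | Z ∈ M.mu ∧ Z ⊂ (V : Set Ordinal)} := ⟨Y.2, hY⟩
  rw [hsp.2.2] at hmem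
  rcases hmem with (hmem | hmem) | hmem
  · exact Or.inl hmem.2.1
  · exact Or.inr hmem.2.1
  · rcases hmem with hmem | hmem
    · exact Or.inl (le_of_eq hmem)
    · exact Or.inr (le_of_eq hmem)

end ImageLemmas

section Coherence

set_option linter.deprecated false

variable {κ : Cardinal.{0}} {M : TwoCardinal κ}

/-- The key coherence lemma: if `γ` lies in two members of `μ` then the lower-rank one,
below `γ`, is contained in the higher-rank one. -/
theorem coherence_aux :
    ∀ V W X : M.mu, (W : Set Ordinal) ⊆ (V : Set Ordinal) →
      (X : Set Ordinal) ⊆ (V : Set Ordinal) → M.wf.rank W ≤ M.wf.rank X →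
      ∀ γ ∈ (W : Set Ordinal) ∩ (X : Set Ordinal),
        (W : Set Ordinal) ∩ Set.Iio γ ⊆ (X : Set Ordinal) := by
  intro V
  induction V using M.wf.induction with
  | _ V IH =>
    intro W X hWV hXV hr γ hγ
    by_cases hXeq : (X : Set Ordinal) = (V : Set Ordinal)
    · exact fun x hx => hXeq ▸ hWV hx.1
    have hXV' : (X : Set Ordinal) ⊂ (V : Set Ordinal) := ⟨hXV, fun h => hXeq (le_antisymm hXV h)⟩
    have hWV' : (W : Set Ordinal) ⊂ (V : Set Ordinal) := by
      rcases hWV.ssubset_or_eq with h | h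
      · exact h
      · exfalso
        have h1 : M.wf.rank X < M.wf.rank V := M.wfRank_lt_of_ssubset hXV'
        have h2 : M.wf.rank W = M.wf.rank V := congrArg M.wf.rank (Subtype.ext h)
        exact absurd (hr.trans_lt h1) (by rw [h2]; exact lt_irrefl _)
    rcases M.locAlmostDirected V with had | ⟨V₁, V₂, hr', hstar', hcone'⟩
    · obtain ⟨Z, hZmem, hZV, hWZ, hXZ⟩ := had W W.2 X X.2 hWV' hXV'
      exact IH ⟨Z, hZmem⟩ hZV W X hWZ hXZ hr γ hγ
    · have hsp : M.SplitAt V V₁ V₂ := ⟨hr', hstar', hcone'⟩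
      rcases hsp.place hWV' with hW1 | hW2 <;> rcases hsp.place hXV' with hX1 | hX2
      · exact IH V₁ hsp.ssub₁ W X hW1 hX1 hr γ hγ
      · -- W in V₁, X in V₂
        rcases hW1.ssubset_or_eq with hWss | hWeq
        · -- move W across to V₂
          have hγ12 : γ ∈ (V₁ : Set Ordinal) ∩ (V₂ : Set Ordinal) := ⟨hW1 hγ.1, hX2 hγ.2⟩
          obtain ⟨hW'mem, hW'V₂⟩ := image_cone_mem hsp.1 W.2 hWss
          set W' : M.mu := ⟨omap (V₁ : Set Ordinal) (V₂ : Set Ordinal) '' (W : Set Ordinal),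
            hW'mem⟩ with hW'def
          have hrW' : M.wf.rank W' = M.wf.rank W := image_rank hsp.1 W hWss W' rfl
          have hγW' : γ ∈ (W' : Set Ordinal) := ⟨γ, hγ.1, hsp.omap_fix hγ12⟩
          have hsub : (W' : Set Ordinal) ∩ Set.Iio γ ⊆ (X : Set Ordinal) :=
            IH V₂ hsp.ssub₂ W' X hW'V₂.1 hX2 (hrW'.le.trans hr) γ ⟨hγW', hγ.2⟩
          intro x hx
          have hx12 : x ∈ (V₁ : Set Ordinal) ∩ (V₂ : Set Ordinal) := by
            have : x ∈ (V₁ : Set Ordinal) ∩ Set.Iio γ := ⟨hW1 hx.1, hx.2⟩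
            rw [hsp.init₁ hγ12] at this
            exact this.1
          exact hsub ⟨⟨x, hx.1, hsp.omap_fix hx12⟩, hx.2⟩
        · -- W = V₁ : then X = V₂ by rank comparison
          have hrX : M.wf.rank X ≤ M.wf.rank V₂ := M.wfRank_le_of_subset hX2
          have hrW : M.wf.rank W = M.wf.rank V₁ := congrArg M.wf.rank (Subtype.ext hWeq)
          have hXeq₂ : X = V₂ := by
            apply M.eq_of_subset_of_wfRank_le hX2
            rw [← hsp.1, ← hrW]
            exact hr
          have hγ12 : γ ∈ (V₁ : Set Ordinal) ∩ (V₂ : Set Ordinal) := by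
            refine ⟨?_, ?_⟩
            · rw [← hWeq]; exact hγ.1
            · rw [← congrArg (fun Y : M.mu => (Y : Set Ordinal)) hXeq₂]; exact hγ.2
          intro x hx
          have hx' : x ∈ (V₁ : Set Ordinal) ∩ Set.Iio γ := ⟨hWeq ▸ hx.1, hx.2⟩
          rw [hsp.init₁ hγ12] at hx'
          rw [← congrArg (fun Y : M.mu => (Y : Set Ordinal)) hXeq₂] at hx'
          exact hx'.1.2
      · -- W in V₂, X in V₁ : symmetric
        rcases hW2.ssubset_or_eq with hWss | hWeq
        · have hγ12 : γ ∈ (V₁ : Set Ordinal) ∩ (V₂ : Set Ordinal) := ⟨hX1 hγ.2, hW2 hγ.1⟩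
          obtain ⟨hW'mem, hW'V₁⟩ := image_cone_mem hsp.1.symm W.2 hWss
          set W' : M.mu := ⟨omap (V₂ : Set Ordinal) (V₁ : Set Ordinal) '' (W : Set Ordinal),
            hW'mem⟩ with hW'def
          have hrW' : M.wf.rank W' = M.wf.rank W := image_rank hsp.1.symm W hWss W' rfl
          have hγW' : γ ∈ (W' : Set Ordinal) := ⟨γ, hγ.1, hsp.omap_fix' hγ12⟩
          have hsub : (W' : Set Ordinal) ∩ Set.Iio γ ⊆ (X : Set Ordinal) :=
            IH V₁ hsp.ssub₁ W' X hW'V₁.1 hX1 (hrW'.le.trans hr) γ ⟨hγW', hγ.2⟩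
          intro x hx
          have hx12 : x ∈ (V₁ : Set Ordinal) ∩ (V₂ : Set Ordinal) := by
            have : x ∈ (V₂ : Set Ordinal) ∩ Set.Iio γ := ⟨hW2 hx.1, hx.2⟩
            rw [hsp.init₂ hγ12] at this
            exact this.1
          exact hsub ⟨⟨x, hx.1, hsp.omap_fix' hx12⟩, hx.2⟩
        · have hrX : M.wf.rank X ≤ M.wf.rank V₁ := M.wfRank_le_of_subset hX1
          have hrW : M.wf.rank W = M.wf.rank V₂ := congrArg M.wf.rank (Subtype.ext hWeq)
          have hXeq₁ : X = V₁ := by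
            apply M.eq_of_subset_of_wfRank_le hX1
            rw [hsp.1, ← hrW]
            exact hr
          have hγ12 : γ ∈ (V₁ : Set Ordinal) ∩ (V₂ : Set Ordinal) := by
            refine ⟨?_, ?_⟩
            · rw [← congrArg (fun Y : M.mu => (Y : Set Ordinal)) hXeq₁]; exact hγ.2
            · rw [← hWeq]; exact hγ.1
          intro x hx
          have hx' : x ∈ (V₂ : Set Ordinal) ∩ Set.Iio γ := ⟨hWeq ▸ hx.1, hx.2⟩
          rw [hsp.init₂ hγ12] at hx'
          rw [← congrArg (fun Y : M.mu => (Y : Set Ordinal)) hXeq₁] at hx'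
          exact hx'.1.1
      · exact IH V₂ hsp.ssub₂ W X hW2 hX2 hr γ hγ

/-- Coherence, packaged: if `γ ∈ W ∩ X` and `rank W ≤ rank X` then `W ∩ Iio γ ⊆ X`. -/
theorem coherence {W X : M.mu} (hr : M.wf.rank W ≤ M.wf.rank X) {γ : Ordinal}
    (hγ : γ ∈ (W : Set Ordinal) ∩ (X : Set Ordinal)) :
    (W : Set Ordinal) ∩ Set.Iio γ ⊆ (X : Set Ordinal) := by
  obtain ⟨V, hVmem, hWV, hXV⟩ := M.directed (W : Set Ordinal) W.2 (X : Set Ordinal) X.2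
  exact coherence_aux ⟨V, hVmem⟩ W X hWV hXV hr γ hγ

/-- Coherence for equal ranks gives equality of initial segments. -/
theorem coherence_eq {W X : M.mu} (hr : M.wf.rank W = M.wf.rank X) {γ : Ordinal}
    (hγ : γ ∈ (W : Set Ordinal) ∩ (X : Set Ordinal)) :
    (W : Set Ordinal) ∩ Set.Iio γ = (X : Set Ordinal) ∩ Set.Iio γ := by
  apply Set.Subset.antisymm
  · intro x hx
    exact ⟨coherence hr.le hγ hx, hx.2⟩
  · intro x hx
    exact ⟨coherence hr.ge ⟨hγ.2, hγ.1⟩ hx, hx.2⟩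

end Coherence

end TwoCardinal


/-! ### The transfer lemma -/

namespace TwoCardinal

section Transfer

set_option linter.deprecated false

variable {κ : Cardinal.{0}} {M : TwoCardinal κ}

/-- Conclusion of the transfer lemma: a star with the same ranks as `(X₁, X₂)`, whose
union contains `W`, with membership sides preserved for elements of `W`. -/
def TransferConcl (W X₁ X₂ : M.mu) : Prop :=
  ∃ Y₁ Y₂ Y : M.mu, M.wf.rank Y₁ = M.wf.rank X₁ ∧ M.wf.rank Y₂ = M.wf.rank X₁ ∧
    IsStar (Y₁ : Set Ordinal) (Y₂ : Set Ordinal) (Y : Set Ordinal) ∧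
    (W : Set Ordinal) ⊆ (Y : Set Ordinal) ∧
    (∀ α ∈ (W : Set Ordinal), α ∈ (X₁ : Set Ordinal) \ (X₂ : Set Ordinal) →
      α ∈ (Y₁ : Set Ordinal) \ (Y₂ : Set Ordinal)) ∧
    (∀ α ∈ (W : Set Ordinal), α ∈ (X₂ : Set Ordinal) \ (X₁ : Set Ordinal) →
      α ∈ (Y₂ : Set Ordinal) \ (Y₁ : Set Ordinal))

theorem transfer_aux :
    ∀ V W X₁ X₂ X : M.mu, (W : Set Ordinal) ⊆ (V : Set Ordinal) →
      (X : Set Ordinal) ⊆ (V : Set Ordinal) → M.wf.rank X₁ = M.wf.rank X₂ →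
      IsStar (X₁ : Set Ordinal) (X₂ : Set Ordinal) (X : Set Ordinal) →
      (X₁ : Set Ordinal) ≠ (X₂ : Set Ordinal) → M.wf.rank W < M.wf.rank X →
      TransferConcl W X₁ X₂ := by
  intro V
  induction V using M.wf.induction with
  | _ V IH =>
    intro W X₁ X₂ X hWV hXV hr hstar hne hrW
    by_cases hWX : (W : Set Ordinal) ⊆ (X : Set Ordinal)
    · exact ⟨X₁, X₂, X, rfl, hr.symm, hstar, hWX, fun α _ h => h, fun α _ h => h⟩
    have hX₁X : (X₁ : Set Ordinal) ⊂ (X : Set Ordinal) := by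
      refine ⟨hstar.2.1 ▸ Set.subset_union_left, fun hsub => ?_⟩
      have h2 : (X₂ : Set Ordinal) ⊆ (X₁ : Set Ordinal) := fun x hx =>
        hsub (hstar.2.1 ▸ Set.subset_union_right hx)
      exact hne (congrArg _ (M.eq_of_subset_of_wfRank_le h2 hr.le)).symm
    have hX₂X : (X₂ : Set Ordinal) ⊂ (X : Set Ordinal) := by
      refine ⟨hstar.2.1 ▸ Set.subset_union_right, fun hsub => ?_⟩
      have h1 : (X₁ : Set Ordinal) ⊆ (X₂ : Set Ordinal) := fun x hx =>
        hsub (hstar.2.1 ▸ Set.subset_union_left hx)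
      exact hne (congrArg _ (M.eq_of_subset_of_wfRank_le h1 hr.ge))
    have hXV' : (X : Set Ordinal) ⊂ (V : Set Ordinal) := by
      refine ⟨hXV, fun hsub => hWX ?_⟩
      intro x hx
      exact (le_antisymm hXV hsub) ▸ hWV hx
    have hWV' : (W : Set Ordinal) ⊂ (V : Set Ordinal) := by
      rcases hWV.ssubset_or_eq with h | h
      · exact h
      · exfalso
        have h1 : M.wf.rank X ≤ M.wf.rank W := by
          rw [congrArg M.wf.rank (Subtype.ext h)]
          exact M.wfRank_le_of_subset hXV
        exact absurd (h1.trans_lt hrW) (lt_irrefl _)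
    rcases M.locAlmostDirected V with had | ⟨V₁, V₂, hr', hstar', hcone'⟩
    · obtain ⟨Z, hZmem, hZV, hWZ, hXZ⟩ := had W W.2 X X.2 hWV' hXV'
      exact IH ⟨Z, hZmem⟩ hZV W X₁ X₂ X hWZ hXZ hr hstar hne hrW
    · have hsp : M.SplitAt V V₁ V₂ := ⟨hr', hstar', hcone'⟩
      rcases hsp.place hWV' with hW1 | hW2 <;> rcases hsp.place hXV' with hX1 | hX2
      · exact IH V₁ hsp.ssub₁ W X₁ X₂ X hW1 hX1 hr hstar hne hrW
      · -- W ⊆ V₁, X ⊆ V₂ : move the star across to V₁ via omap V₂ V₁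
        have hb₂ := M.bdd_coe V₂
        have hb₁ := M.bdd_coe V₁
        have hotp : otp (V₂ : Set Ordinal) = otp (V₁ : Set Ordinal) := hsp.otp_eq.symm
        have hX₁V₂ : (X₁ : Set Ordinal) ⊂ (V₂ : Set Ordinal) := hX₁X.trans_subset hX2
        have hX₂V₂ : (X₂ : Set Ordinal) ⊂ (V₂ : Set Ordinal) := hX₂X.trans_subset hX2
        obtain ⟨hY₁mem, hY₁V₁⟩ := image_cone_mem hsp.1.symm X₁.2 hX₁V₂
        obtain ⟨hY₂mem, hY₂V₁⟩ := image_cone_mem hsp.1.symm X₂.2 hX₂V₂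
        set Φ := omap (V₂ : Set Ordinal) (V₁ : Set Ordinal) with hΦ
        set Y₁' : M.mu := ⟨Φ '' (X₁ : Set Ordinal), hY₁mem⟩ with hY₁def
        set Y₂' : M.mu := ⟨Φ '' (X₂ : Set Ordinal), hY₂mem⟩ with hY₂def
        have hrY₁ : M.wf.rank Y₁' = M.wf.rank X₁ := image_rank hsp.1.symm X₁ hX₁V₂ Y₁' rfl
        have hrY₂ : M.wf.rank Y₂' = M.wf.rank X₂ := image_rank hsp.1.symm X₂ hX₂V₂ Y₂' rfl
        have hstar' : IsStar (Y₁' : Set Ordinal) (Y₂' : Set Ordinal) (Φ '' (X : Set Ordinal)) :=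
          IsStar.image hb₂ hb₁ hotp hX₁V₂.1 hX₂V₂.1 hX2 hstar
        have hne' : (Y₁' : Set Ordinal) ≠ (Y₂' : Set Ordinal) := by
          intro h
          apply hne
          have h1 := (image_subset_iff_of_rank hsp.1.symm hX₁V₂.1 hX₂V₂.1).1 h.le
          have h2 := (image_subset_iff_of_rank hsp.1.symm hX₂V₂.1 hX₁V₂.1).1 h.ge
          exact le_antisymm h1 h2
        -- the image of X, as a member of μ
        obtain ⟨X' , hX'sub, hX'eq, hrX'⟩ :
            ∃ X' : M.mu, (X' : Set Ordinal) ⊆ (V₁ : Set Ordinal) ∧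
              (X' : Set Ordinal) = Φ '' (X : Set Ordinal) ∧ M.wf.rank X' = M.wf.rank X := by
          rcases hX2.ssubset_or_eq with hss | heq
          · obtain ⟨hmem, hsub⟩ := image_cone_mem hsp.1.symm X.2 hss
            exact ⟨⟨Φ '' (X : Set Ordinal), hmem⟩, hsub.1, rfl,
              image_rank hsp.1.symm X hss _ rfl⟩
          · refine ⟨V₁, le_refl _, ?_, ?_⟩
            · rw [heq, hΦ, omap_image hb₂ hb₁ hotp]
            · rw [hsp.1, congrArg M.wf.rank (Subtype.ext heq)]
        have hsidefix : ∀ α ∈ (W : Set Ordinal), α ∈ (X : Set Ordinal) → Φ α = α := by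
          intro α hαW hαX
          exact hsp.omap_fix' ⟨hW1 hαW, hX2 hαX⟩
        have hmemΦ : ∀ {α : Ordinal} {Z : Set Ordinal}, Z ⊆ (V₂ : Set Ordinal) →
            α ∈ (V₁ : Set Ordinal) ∩ (V₂ : Set Ordinal) → (α ∈ Φ '' Z ↔ α ∈ Z) := by
          intro α Z hZ hα
          constructor
          · rintro ⟨z, hz, hzα⟩
            have := omap_injOn hb₂ hb₁ hotp (hZ hz) hα.2
            rw [← this (hzα.trans (hsp.omap_fix' hα).symm)]
            exact hz
          · intro hαZ
            exact ⟨α, hαZ, hsp.omap_fix' hα⟩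
        have hstar'' : IsStar (Y₁' : Set Ordinal) (Y₂' : Set Ordinal) (X' : Set Ordinal) := by
          rw [hX'eq]; exact hstar'
        have htrans := IH V₁ hsp.ssub₁ W Y₁' Y₂' X' hW1 hX'sub (hrY₁.trans (hr.trans hrY₂.symm))
          hstar'' hne' (by rw [hrX']; exact hrW)
        obtain ⟨Z₁, Z₂, Z, hz1, hz2, hzstar, hzW, hzs1, hzs2⟩ := htrans
        refine ⟨Z₁, Z₂, Z, by rw [hz1, hrY₁], by rw [hz2, hrY₁], hzstar, hzW, ?_, ?_⟩
        · intro α hαW hα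
          apply hzs1 α hαW
          have hα12 : α ∈ (V₁ : Set Ordinal) ∩ (V₂ : Set Ordinal) :=
            ⟨hW1 hαW, hX2 (hX₁X.1 hα.1)⟩
          constructor
          · exact (hmemΦ hX₁V₂.1 hα12).2 hα.1
          · intro hc
            exact hα.2 ((hmemΦ hX₂V₂.1 hα12).1 hc)
        · intro α hαW hα
          apply hzs2 α hαW
          have hα12 : α ∈ (V₁ : Set Ordinal) ∩ (V₂ : Set Ordinal) :=
            ⟨hW1 hαW, hX2 (hX₂X.1 hα.1)⟩
          constructor
          · exact (hmemΦ hX₂V₂.1 hα12).2 hα.1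
          · intro hc
            exact hα.2 ((hmemΦ hX₁V₂.1 hα12).1 hc)
      · -- W ⊆ V₂, X ⊆ V₁ : symmetric, move the star across to V₂ via omap V₁ V₂
        have hb₂ := M.bdd_coe V₂
        have hb₁ := M.bdd_coe V₁
        have hotp : otp (V₁ : Set Ordinal) = otp (V₂ : Set Ordinal) := hsp.otp_eq
        have hX₁V₁ : (X₁ : Set Ordinal) ⊂ (V₁ : Set Ordinal) := hX₁X.trans_subset hX1
        have hX₂V₁ : (X₂ : Set Ordinal) ⊂ (V₁ : Set Ordinal) := hX₂X.trans_subset hX1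
        obtain ⟨hY₁mem, hY₁V₂⟩ := image_cone_mem hsp.1 X₁.2 hX₁V₁
        obtain ⟨hY₂mem, hY₂V₂⟩ := image_cone_mem hsp.1 X₂.2 hX₂V₁
        set Φ := omap (V₁ : Set Ordinal) (V₂ : Set Ordinal) with hΦ
        set Y₁' : M.mu := ⟨Φ '' (X₁ : Set Ordinal), hY₁mem⟩ with hY₁def
        set Y₂' : M.mu := ⟨Φ '' (X₂ : Set Ordinal), hY₂mem⟩ with hY₂def
        have hrY₁ : M.wf.rank Y₁' = M.wf.rank X₁ := image_rank hsp.1 X₁ hX₁V₁ Y₁' rfl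
        have hrY₂ : M.wf.rank Y₂' = M.wf.rank X₂ := image_rank hsp.1 X₂ hX₂V₁ Y₂' rfl
        have hstar' : IsStar (Y₁' : Set Ordinal) (Y₂' : Set Ordinal) (Φ '' (X : Set Ordinal)) :=
          IsStar.image hb₁ hb₂ hotp hX₁V₁.1 hX₂V₁.1 hX1 hstar
        have hne' : (Y₁' : Set Ordinal) ≠ (Y₂' : Set Ordinal) := by
          intro h
          apply hne
          have h1 := (image_subset_iff_of_rank hsp.1 hX₁V₁.1 hX₂V₁.1).1 h.le
          have h2 := (image_subset_iff_of_rank hsp.1 hX₂V₁.1 hX₁V₁.1).1 h.ge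
          exact le_antisymm h1 h2
        obtain ⟨X' , hX'sub, hX'eq, hrX'⟩ :
            ∃ X' : M.mu, (X' : Set Ordinal) ⊆ (V₂ : Set Ordinal) ∧
              (X' : Set Ordinal) = Φ '' (X : Set Ordinal) ∧ M.wf.rank X' = M.wf.rank X := by
          rcases hX1.ssubset_or_eq with hss | heq
          · obtain ⟨hmem, hsub⟩ := image_cone_mem hsp.1 X.2 hss
            exact ⟨⟨Φ '' (X : Set Ordinal), hmem⟩, hsub.1, rfl,
              image_rank hsp.1 X hss _ rfl⟩
          · refine ⟨V₂, le_refl _, ?_, ?_⟩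
            · rw [heq, hΦ, omap_image hb₁ hb₂ hotp]
            · rw [← hsp.1, congrArg M.wf.rank (Subtype.ext heq)]
        have hmemΦ : ∀ {α : Ordinal} {Z : Set Ordinal}, Z ⊆ (V₁ : Set Ordinal) →
            α ∈ (V₁ : Set Ordinal) ∩ (V₂ : Set Ordinal) → (α ∈ Φ '' Z ↔ α ∈ Z) := by
          intro α Z hZ hα
          constructor
          · rintro ⟨z, hz, hzα⟩
            have := omap_injOn hb₁ hb₂ hotp (hZ hz) hα.1
            rw [← this (hzα.trans (hsp.omap_fix hα).symm)]
            exact hz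
          · intro hαZ
            exact ⟨α, hαZ, hsp.omap_fix hα⟩
        have hstar'' : IsStar (Y₁' : Set Ordinal) (Y₂' : Set Ordinal) (X' : Set Ordinal) := by
          rw [hX'eq]; exact hstar'
        have htrans := IH V₂ hsp.ssub₂ W Y₁' Y₂' X' hW2 hX'sub (hrY₁.trans (hr.trans hrY₂.symm))
          hstar'' hne' (by rw [hrX']; exact hrW)
        obtain ⟨Z₁, Z₂, Z, hz1, hz2, hzstar, hzW, hzs1, hzs2⟩ := htrans
        refine ⟨Z₁, Z₂, Z, by rw [hz1, hrY₁], by rw [hz2, hrY₁], hzstar, hzW, ?_, ?_⟩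
        · intro α hαW hα
          apply hzs1 α hαW
          have hα12 : α ∈ (V₁ : Set Ordinal) ∩ (V₂ : Set Ordinal) :=
            ⟨hX1 (hX₁X.1 hα.1), hW2 hαW⟩
          constructor
          · exact (hmemΦ hX₁V₁.1 hα12).2 hα.1
          · intro hc
            exact hα.2 ((hmemΦ hX₂V₁.1 hα12).1 hc)
        · intro α hαW hα
          apply hzs2 α hαW
          have hα12 : α ∈ (V₁ : Set Ordinal) ∩ (V₂ : Set Ordinal) :=
            ⟨hX1 (hX₂X.1 hα.1), hW2 hαW⟩
          constructor
          · exact (hmemΦ hX₂V₁.1 hα12).2 hα.1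
          · intro hc
            exact hα.2 ((hmemΦ hX₁V₁.1 hα12).1 hc)
      · exact IH V₂ hsp.ssub₂ W X₁ X₂ X hW2 hX2 hr hstar hne hrW

/-- The transfer lemma, packaged. -/
theorem transfer {W X₁ X₂ X : M.mu} (hr : M.wf.rank X₁ = M.wf.rank X₂)
    (hstar : IsStar (X₁ : Set Ordinal) (X₂ : Set Ordinal) (X : Set Ordinal))
    (hne : (X₁ : Set Ordinal) ≠ (X₂ : Set Ordinal)) (hrW : M.wf.rank W < M.wf.rank X) :
    TransferConcl W X₁ X₂ := by
  obtain ⟨V, hVmem, hWV, hXV⟩ := M.directed (W : Set Ordinal) W.2 (X : Set Ordinal) X.2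
  exact transfer_aux ⟨V, hVmem⟩ W X₁ X₂ X hWV hXV hr hstar hne hrW

end Transfer

end TwoCardinal


/-! ### Tools for the gap theorem -/

theorem otp_card_lt {c : Cardinal.{0}} {S : Set Ordinal.{0}} {γ : Ordinal}
    (hS : S ⊆ Set.Iio γ) (hγ : γ < c.ord) : (otp S).card < c := by
  have h1 : otp S ≤ γ := by
    have := otp_le_otp (T := Set.Iio γ) ⟨γ, subset_rfl⟩ hS
    rwa [otp_Iio] at this
  exact lt_of_le_of_lt (Ordinal.card_le_card h1) (Cardinal.lt_ord.1 hγ)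

/-- A subset of `Iio c.ord` of order type of cardinality `< c`, `c` regular, is bounded. -/
theorem bdd_of_card_lt {c : Cardinal.{0}} (hc : c.IsRegular) {S : Set Ordinal.{0}}
    (hS : S ⊆ Set.Iio c.ord) (hcard : (otp S).card < c) :
    ∃ η < c.ord, S ⊆ Set.Iio η := by
  have hbddS : Bdd S := ⟨c.ord, hS⟩
  set t := otp S with ht
  classical
  set f : ∀ p, p < t → Ordinal.{0} := fun p hp => (otp_enum_exists hbddS hp).choose with hf
  have hfs : ∀ p hp, f p hp ∈ S ∧ otp (S ∩ Set.Iio (f p hp)) = p := fun p hp =>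
    ⟨(otp_enum_exists hbddS hp).choose_spec.1, (otp_enum_exists hbddS hp).choose_spec.2⟩
  have hb : Ordinal.bsup t f < c.ord := by
    apply Ordinal.bsup_lt_ord
    · rw [hc.cof_eq]; exact hcard
    · intro p hp
      exact hS (hfs p hp).1
  refine ⟨Ordinal.bsup t f + 1, ?_, ?_⟩
  · rw [Ordinal.add_one_eq_succ]
    exact (Cardinal.isSuccLimit_ord hc.1).succ_lt hb
  · intro x hx
    have hpx : otp (S ∩ Set.Iio x) < t := otp_pos_lt hbddS hx
    have hxf : f _ hpx = x := by
      apply otp_pos_inj (hfs _ hpx).1 hx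
      rw [(hfs _ hpx).2]
    have hle : x ≤ Ordinal.bsup t f := hxf ▸ Ordinal.le_bsup f _ hpx
    have h2 : Ordinal.bsup t f < Ordinal.bsup t f + 1 := by
      rw [Ordinal.add_one_eq_succ]
      exact Order.lt_succ _
    exact hle.trans_lt h2

namespace TwoCardinal

section GapTools

set_option linter.deprecated false

variable {κ : Cardinal.{0}} {M : TwoCardinal κ}

theorem exists_mem {α : Ordinal} (hα : α < (Order.succ κ).ord) :
    ∃ X : M.mu, α ∈ (X : Set Ordinal) := by
  have hmem : α ∈ ⋃₀ M.mu := by rw [M.covers]; exact hα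
  obtain ⟨X, hX, hαX⟩ := hmem
  exact ⟨⟨X, hX⟩, hαX⟩

theorem exists_mem_pair {α β : Ordinal} (hα : α < (Order.succ κ).ord)
    (hβ : β < (Order.succ κ).ord) :
    ∃ X : M.mu, α ∈ (X : Set Ordinal) ∧ β ∈ (X : Set Ordinal) := by
  obtain ⟨X, hX⟩ := exists_mem (M := M) hα
  obtain ⟨Y, hY⟩ := exists_mem (M := M) hβ
  obtain ⟨Z, hZmem, hXZ, hYZ⟩ := M.directed (X : Set Ordinal) X.2 (Y : Set Ordinal) Y.2
  exact ⟨⟨Z, hZmem⟩, hXZ hX, hYZ hY⟩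

theorem card_coe_lt (X : M.mu) : #((X : Set Ordinal) : Set Ordinal.{0}) < Cardinal.lift.{1} κ := by
  rw [← card_otp (M.bdd_coe X)]
  exact Cardinal.lift_lt.2 (M.mem_small (X : Set Ordinal) X.2)

theorem otp_card_lt_of_mem {X : M.mu} {S : Set Ordinal} (hS : S ⊆ (X : Set Ordinal)) :
    (otp S).card < κ :=
  lt_of_le_of_lt (Ordinal.card_le_card (otp_le_otp (M.bdd_coe X) hS))
    (M.mem_small (X : Set Ordinal) X.2)

/-- A minimal-rank member of `μ` containing two ordinals splits, separating them. -/
theorem min_split {α β : Ordinal} (hαβ : α < β) (Z : M.mu) (hαZ : α ∈ (Z : Set Ordinal))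
    (hβZ : β ∈ (Z : Set Ordinal))
    (hmin : ∀ W : M.mu, α ∈ (W : Set Ordinal) → β ∈ (W : Set Ordinal) →
      M.wf.rank Z ≤ M.wf.rank W)
    (hr0 : M.wf.rank Z ≠ 0) :
    ∃ Z₁ Z₂ : M.mu, M.SplitAt Z Z₁ Z₂ ∧ α ∈ (Z₁ : Set Ordinal) \ (Z₂ : Set Ordinal) ∧
      β ∈ (Z₂ : Set Ordinal) \ (Z₁ : Set Ordinal) := by
  rcases M.locAlmostDirected Z with had | ⟨Z₁, Z₂, hr', hstar', hcone'⟩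
  · exfalso
    have hZeq := M.neat Z hr0
    have hα' : α ∈ ⋃₀ {W | W ∈ M.mu ∧ W ⊂ (Z : Set Ordinal)} := hZeq ▸ hαZ
    have hβ' : β ∈ ⋃₀ {W | W ∈ M.mu ∧ W ⊂ (Z : Set Ordinal)} := hZeq ▸ hβZ
    obtain ⟨W₁, ⟨hW₁mem, hW₁Z⟩, hαW₁⟩ := hα'
    obtain ⟨W₂, ⟨hW₂mem, hW₂Z⟩, hβW₂⟩ := hβ'
    obtain ⟨U, hUmem, hUZ, h1U, h2U⟩ := had W₁ hW₁mem W₂ hW₂mem hW₁Z hW₂Z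
    have := hmin ⟨U, hUmem⟩ (h1U hαW₁) (h2U hβW₂)
    exact absurd (this.trans_lt (M.wfRank_lt_of_ssubset (X := ⟨U, hUmem⟩) (Y := Z) hUZ))
      (lt_irrefl _)
  · have hsp : M.SplitAt Z Z₁ Z₂ := ⟨hr', hstar', hcone'⟩
    have hnot : ∀ i : M.mu, (i : Set Ordinal) ⊂ (Z : Set Ordinal) →
        α ∈ (i : Set Ordinal) → β ∈ (i : Set Ordinal) → False := by
      intro i hi hαi hβi
      exact absurd ((hmin i hαi hβi).trans_lt (M.wfRank_lt_of_ssubset hi)) (lt_irrefl _)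
    have hαZ' : α ∈ (Z₁ : Set Ordinal) ∪ (Z₂ : Set Ordinal) := hsp.2.1.2.1 ▸ hαZ
    have hβZ' : β ∈ (Z₁ : Set Ordinal) ∪ (Z₂ : Set Ordinal) := hsp.2.1.2.1 ▸ hβZ
    rcases hαZ' with hα1 | hα2
    · have hβn1 : β ∉ (Z₁ : Set Ordinal) := fun h => hnot Z₁ hsp.ssub₁ hα1 h
      have hβ2 : β ∈ (Z₂ : Set Ordinal) := hβZ'.resolve_left hβn1
      have hαn2 : α ∉ (Z₂ : Set Ordinal) := fun h => hnot Z₂ hsp.ssub₂ h hβ2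
      exact ⟨Z₁, Z₂, hsp, ⟨hα1, hαn2⟩, ⟨hβ2, hβn1⟩⟩
    · by_cases hα1 : α ∈ (Z₁ : Set Ordinal)
      · have hβn1 : β ∉ (Z₁ : Set Ordinal) := fun h => hnot Z₁ hsp.ssub₁ hα1 h
        have hβ2 : β ∈ (Z₂ : Set Ordinal) := hβZ'.resolve_left hβn1
        exact absurd (hnot Z₂ hsp.ssub₂ hα2 hβ2) (fun h => h)
      · have hβn2 : β ∉ (Z₂ : Set Ordinal) := fun h => hnot Z₂ hsp.ssub₂ hα2 h
        have hβ1 : β ∈ (Z₁ : Set Ordinal) := hβZ'.resolve_right hβn2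
        exfalso
        exact absurd hαβ (not_lt.2 (hsp.2.1.2.2.2 β ⟨hβ1, hβn2⟩ α ⟨hα2, hα1⟩).le)

/-- There are members of `μ` containing `κ.ord` of arbitrarily large rank below `κ.ord`. -/
theorem exists_high_rank (hκ : κ.IsRegular) {η : Ordinal.{0}} (hη : η < κ.ord) :
    ∃ X : M.mu, κ.ord ∈ (X : Set Ordinal) ∧ η ≤ M.rank X := by
  classical
  by_contra hcon
  push_neg at hcon
  have hko : (κ.ord : Ordinal) < (Order.succ κ).ord :=
    Cardinal.ord_lt_ord.2 (Order.lt_succ κ)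
  -- for each rank r < η pick a bound for the representative's trace below κ.ord
  set f : ∀ r, r < η → Ordinal.{0} := fun r _ =>
    if h : ∃ X : M.mu, κ.ord ∈ (X : Set Ordinal) ∧ M.rank X = r then
      (bdd_of_card_lt hκ (Set.inter_subset_right)
        (otp_card_lt_of_mem (X := h.choose) Set.inter_subset_left)).choose
    else 0 with hfdef
  have hfspec : ∀ (r : Ordinal) (hr : r < η)
      (h : ∃ X : M.mu, κ.ord ∈ (X : Set Ordinal) ∧ M.rank X = r),
      f r hr < κ.ord ∧ ((h.choose : Set Ordinal) ∩ Set.Iio κ.ord) ⊆ Set.Iio (f r hr) := by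
    intro r hr h
    simp only [hfdef]
    rw [dif_pos h]
    exact (bdd_of_card_lt hκ (Set.inter_subset_right)
      (otp_card_lt_of_mem (X := h.choose) Set.inter_subset_left)).choose_spec
  have hflt : ∀ (r : Ordinal) (hr : r < η), f r hr < κ.ord := by
    intro r hr
    by_cases h : ∃ X : M.mu, κ.ord ∈ (X : Set Ordinal) ∧ M.rank X = r
    · exact (hfspec r hr h).1
    · simp only [hfdef]
      rw [dif_neg h]
      exact (Cardinal.isSuccLimit_ord hκ.1).bot_lt
  have hcover : ∀ δ, δ < κ.ord → ∃ (r : Ordinal) (hr : r < η), δ < f r hr := by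
    intro δ hδ
    obtain ⟨W, hδW, hkoW⟩ := exists_mem_pair (M := M) (hδ.trans hko) hko
    have hrW : M.rank W < η := hcon W hkoW
    have hex : ∃ X : M.mu, κ.ord ∈ (X : Set Ordinal) ∧ M.rank X = M.rank W := ⟨W, hkoW, rfl⟩
    refine ⟨M.rank W, hrW, ?_⟩
    have hrr : M.wf.rank W ≤ M.wf.rank hex.choose := by
      rw [← M.lift_rank hκ, ← M.lift_rank hκ, Ordinal.lift_le, hex.choose_spec.2]
    have hco := coherence (M := M) hrr (γ := κ.ord) ⟨hkoW, hex.choose_spec.1⟩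
    have hδin : δ ∈ (hex.choose : Set Ordinal) ∩ Set.Iio κ.ord := ⟨hco ⟨hδW, hδ⟩, hδ⟩
    exact (hfspec _ hrW hex).2 hδin
  have hbsup : Ordinal.bsup η f < κ.ord := by
    apply Ordinal.bsup_lt_ord
    · rw [hκ.cof_eq]
      exact Cardinal.lt_ord.1 hη
    · exact hflt
  have hsup : κ.ord ≤ Ordinal.bsup η f := by
    apply le_of_forall_lt
    intro δ hδ
    obtain ⟨r, hr, hδf⟩ := hcover δ hδ
    exact hδf.trans_le (Ordinal.le_bsup f r hr)
  exact absurd (hsup.trans_lt hbsup) (lt_irrefl _)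

end GapTools

end TwoCardinal


/-! ### Core arguments for the gap theorem -/

theorem exists_fiber_gt {α β : Type u} (f : α → β) (c : Cardinal.{u}) (hβ : #β ≤ c)
    (hc : ℵ₀ ≤ c) (hα : c < #α) : ∃ y, c < #(f ⁻¹' {y}) := by
  by_contra h
  push_neg at h
  have hle : #α ≤ c := by
    calc #α = #(Σ y, f ⁻¹' {y}) := Cardinal.mk_congr (Equiv.sigmaFiberEquiv f).symm
    _ = Cardinal.sum (fun y => #(f ⁻¹' {y})) := Cardinal.mk_sigma _
    _ ≤ Cardinal.sum (fun _ : β => c) := Cardinal.sum_le_sum _ _ h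
    _ = #β * c := Cardinal.sum_const' β c
    _ ≤ c * c := mul_le_mul_left hβ c
    _ = c := Cardinal.mul_eq_self hc
  exact absurd (hα.trans_le hle) (lt_irrefl c)

namespace TwoCardinal

section Core

set_option linter.deprecated false

variable {κ : Cardinal.{0}} {M : TwoCardinal κ}

/-- Core of conclusion (1): no level can lie in both `A α` and `B α`. -/
theorem part1_core (hκ : κ.IsRegular) {α ξ : Ordinal}
    (hAmem : ∃ X₁ X₂ X : M.mu, M.rank X₁ = ξ ∧ M.rank X₂ = ξ ∧
      IsStar (X₁ : Set Ordinal) (X₂ : Set Ordinal) (X : Set Ordinal) ∧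
      α ∈ (X₁ : Set Ordinal) \ (X₂ : Set Ordinal))
    (hBmem : ∃ Y₁ Y₂ Y : M.mu, M.rank Y₁ = ξ ∧ M.rank Y₂ = ξ ∧
      IsStar (Y₁ : Set Ordinal) (Y₂ : Set Ordinal) (Y : Set Ordinal) ∧
      α ∈ (Y₂ : Set Ordinal) \ (Y₁ : Set Ordinal)) : False := by
  obtain ⟨X₁, X₂, X, hrx1, hrx2, hxstar, hxmem⟩ := hAmem
  obtain ⟨Y₁, Y₂, Y, hry1, hry2, hystar, hymem⟩ := hBmem
  have hwx12 : M.wf.rank X₁ = M.wf.rank X₂ := (M.rank_eq_iff hκ).1 (hrx1.trans hrx2.symm)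
  have hwy12 : M.wf.rank Y₁ = M.wf.rank Y₂ := (M.rank_eq_iff hκ).1 (hry1.trans hry2.symm)
  have hnex : (X₁ : Set Ordinal) ≠ (X₂ : Set Ordinal) := fun h =>
    hxmem.2 (by rw [← h]; exact hxmem.1)
  have hney : (Y₁ : Set Ordinal) ≠ (Y₂ : Set Ordinal) := fun h =>
    hymem.2 (by rw [h]; exact hymem.1)
  have hspX := split_of_star hwx12 hxstar hnex
  have hspY := split_of_star hwy12 hystar hney
  have h1 : M.wf.rank X₁ = M.wf.rank Y₁ := by
    rw [← M.lift_rank hκ, ← M.lift_rank hκ, hrx1, hry1]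
  have hwXY : M.wf.rank X = M.wf.rank Y := by
    rw [hspX.rank_eq, hspY.rank_eq, h1]
  have hαX : α ∈ (X : Set Ordinal) := by
    rw [hxstar.2.1]
    exact Or.inl hxmem.1
  have hαY : α ∈ (Y : Set Ordinal) := by
    rw [hystar.2.1]
    exact Or.inr hymem.1
  have hXY := coherence_eq (M := M) hwXY ⟨hαX, hαY⟩
  have hXα : (X : Set Ordinal) ∩ Set.Iio α = (X₁ : Set Ordinal) ∩ Set.Iio α := by
    ext x
    constructor
    · rintro ⟨hx, hlt⟩
      rw [hxstar.2.1] at hx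
      rcases hx with hx | hx
      · exact ⟨hx, hlt⟩
      · by_cases hx1 : x ∈ (X₁ : Set Ordinal)
        · exact ⟨hx1, hlt⟩
        · exact absurd (hxstar.2.2.2 α hxmem x ⟨hx, hx1⟩) (not_lt.2 hlt.le)
    · rintro ⟨hx, hlt⟩
      refine ⟨?_, hlt⟩
      rw [hxstar.2.1]
      exact Or.inl hx
  have hY₁sub : (Y₁ : Set Ordinal) ⊆ (Y : Set Ordinal) ∩ Set.Iio α := by
    intro y hy
    refine ⟨by rw [hystar.2.1]; exact Or.inl hy, ?_⟩
    by_cases hy2 : y ∈ (Y₂ : Set Ordinal)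
    · exact hystar.inter_lt_diff2 hspY.d1 y ⟨hy, hy2⟩ α hymem
    · exact hystar.2.2.2 y ⟨hy, hy2⟩ α hymem
  have hotp1 : otp (X₁ : Set Ordinal) = otp (Y₁ : Set Ordinal) := M.otp_eq_of_rank_eq h1
  have c1 : otp (Y₁ : Set Ordinal) ≤ otp ((Y : Set Ordinal) ∩ Set.Iio α) :=
    otp_le_otp bdd_inter_Iio hY₁sub
  have c2 : otp ((Y : Set Ordinal) ∩ Set.Iio α) = otp ((X₁ : Set Ordinal) ∩ Set.Iio α) := by
    rw [← hXY, hXα]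
  have c3 : otp ((X₁ : Set Ordinal) ∩ Set.Iio α) < otp (X₁ : Set Ordinal) :=
    otp_pos_lt (M.bdd_coe X₁) hxmem.1
  have : otp (X₁ : Set Ordinal) < otp (X₁ : Set Ordinal) := by
    calc otp (X₁ : Set Ordinal) = otp (Y₁ : Set Ordinal) := hotp1
    _ ≤ otp ((Y : Set Ordinal) ∩ Set.Iio α) := c1
    _ = otp ((X₁ : Set Ordinal) ∩ Set.Iio α) := c2
    _ < otp (X₁ : Set Ordinal) := c3
  exact absurd this (lt_irrefl _)

/-- Transfer a star witness at level `ξ` to one containing both `α` and `β`. -/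
theorem transfer_level (hκ : κ.IsRegular) {α β : Ordinal} {W₀ : M.mu}
    (hαW : α ∈ (W₀ : Set Ordinal)) (hβW : β ∈ (W₀ : Set Ordinal)) (hαβ : α < β)
    {ξ : Ordinal} (hζξ : M.rank W₀ ≤ ξ) {X₁ X₂ X : M.mu}
    (hr1 : M.rank X₁ = ξ) (hr2 : M.rank X₂ = ξ)
    (hstar : IsStar (X₁ : Set Ordinal) (X₂ : Set Ordinal) (X : Set Ordinal))
    (hside : α ∈ (X₁ : Set Ordinal) \ (X₂ : Set Ordinal) ∨
      α ∈ (X₂ : Set Ordinal) \ (X₁ : Set Ordinal)) :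
    ∃ Y₁ Y₂ Y : M.mu, M.rank Y₁ = ξ ∧ M.rank Y₂ = ξ ∧
      IsStar (Y₁ : Set Ordinal) (Y₂ : Set Ordinal) (Y : Set Ordinal) ∧
      M.wf.rank Y = Ordinal.lift.{1} ξ + 1 ∧ α ∈ (Y : Set Ordinal) ∧ β ∈ (Y : Set Ordinal) ∧
      (α ∈ (X₁ : Set Ordinal) \ (X₂ : Set Ordinal) →
        α ∈ (Y₁ : Set Ordinal) \ (Y₂ : Set Ordinal)) ∧
      (α ∈ (X₂ : Set Ordinal) \ (X₁ : Set Ordinal) →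
        α ∈ (Y₂ : Set Ordinal) \ (Y₁ : Set Ordinal)) ∧
      (β ∈ (Y₁ : Set Ordinal) \ (Y₂ : Set Ordinal) ∨
        β ∈ (Y₂ : Set Ordinal) \ (Y₁ : Set Ordinal)) := by
  have hwr12 : M.wf.rank X₁ = M.wf.rank X₂ := (M.rank_eq_iff hκ).1 (hr1.trans hr2.symm)
  have hne : (X₁ : Set Ordinal) ≠ (X₂ : Set Ordinal) := by
    rcases hside with h | h
    · exact fun he => h.2 (by rw [← he]; exact h.1)
    · exact fun he => h.2 (by rw [he]; exact h.1)
  have hspX := split_of_star hwr12 hstar hne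
  have hwr1 : M.wf.rank X₁ = Ordinal.lift.{1} ξ := by rw [← M.lift_rank hκ, hr1]
  have hwrX : M.wf.rank X = Ordinal.lift.{1} ξ + 1 := by rw [hspX.rank_eq, hwr1]
  have hrW₀X : M.wf.rank W₀ < M.wf.rank X := by
    rw [hwrX, ← M.lift_rank hκ, Ordinal.add_one_eq_succ, Order.lt_succ_iff]
    exact Ordinal.lift_le.2 hζξ
  obtain ⟨Y₁, Y₂, Y, hry1, hry2, hystar, hWY, hs1, hs2⟩ := transfer hwr12 hstar hne hrW₀X
  have hMry1 : M.rank Y₁ = ξ := by rw [← hr1]; exact (M.rank_eq_iff hκ).2 hry1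
  have hMry2 : M.rank Y₂ = ξ := by rw [← hr1]; exact (M.rank_eq_iff hκ).2 hry2
  have hneY : (Y₁ : Set Ordinal) ≠ (Y₂ : Set Ordinal) := by
    rcases hside with h | h
    · have hy := hs1 α hαW h
      exact fun he => hy.2 (by rw [← he]; exact hy.1)
    · have hy := hs2 α hαW h
      exact fun he => hy.2 (by rw [he]; exact hy.1)
  have hspY := split_of_star (hry1.trans hry2.symm) hystar hneY
  have hwrY : M.wf.rank Y = Ordinal.lift.{1} ξ + 1 := by rw [hspY.rank_eq, hry1, hwr1]
  have hαY : α ∈ (Y : Set Ordinal) := hWY hαW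
  have hβY : β ∈ (Y : Set Ordinal) := hWY hβW
  refine ⟨Y₁, Y₂, Y, hMry1, hMry2, hystar, hwrY, hαY, hβY, hs1 α hαW, hs2 α hαW, ?_⟩
  have hβY' : β ∈ (Y₁ : Set Ordinal) ∪ (Y₂ : Set Ordinal) := by
    rw [← hystar.2.1]; exact hβY
  by_cases h1 : β ∈ (Y₁ : Set Ordinal) <;> by_cases h2 : β ∈ (Y₂ : Set Ordinal)
  · exfalso
    rcases hside with h | h
    · exact absurd (hystar.2.2.1 β ⟨h1, h2⟩ α (hs1 α hαW h)) (not_lt.2 hαβ.le)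
    · exact absurd (hystar.inter_lt_diff2 hspY.d1 β ⟨h1, h2⟩ α (hs2 α hαW h))
        (not_lt.2 hαβ.le)
  · exact Or.inl ⟨h1, h2⟩
  · exact Or.inr ⟨h2, h1⟩
  · exact absurd hβY' (by rintro (h | h) <;> [exact h1 h; exact h2 h])

end Core

end TwoCardinal

/-- An explicit `(κ,κ⁺)`-Hausdorff gap from a `(κ,κ⁺)`-cardinal. -/
theorem hausdorff_gap (κ : Cardinal) (hκ : κ.IsRegular) (M : TwoCardinal κ)
    (A B : Ordinal → Set Ordinal)
    (hA : ∀ α, A α = {ξ | ξ < κ.ord ∧ ∃ X₁ X₂ X : M.mu, M.rank X₁ = ξ ∧ M.rank X₂ = ξ ∧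
      IsStar (X₁ : Set Ordinal) (X₂ : Set Ordinal) (X : Set Ordinal) ∧
      α ∈ (X₁ : Set Ordinal) \ (X₂ : Set Ordinal)})
    (hB : ∀ α, B α = {ξ | ξ < κ.ord ∧ ∃ X₁ X₂ X : M.mu, M.rank X₁ = ξ ∧ M.rank X₂ = ξ ∧
      IsStar (X₁ : Set Ordinal) (X₂ : Set Ordinal) (X : Set Ordinal) ∧
      α ∈ (X₂ : Set Ordinal) \ (X₁ : Set Ordinal)}) :
    (∀ α : Ordinal, α < (Order.succ κ).ord → A α ∩ B α = ∅) ∧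
    (∀ α β : Ordinal, α < β → β < (Order.succ κ).ord →
      (otp (A α \ A β)).card < κ ∧ (otp (B α \ B β)).card < κ) ∧
    ¬ ∃ C : Set Ordinal, ∀ α : Ordinal, α < (Order.succ κ).ord →
      (otp (A α \ C)).card < κ ∧ (otp (B α ∩ C)).card < κ := by
  classical
  have hAsub : ∀ α, A α ⊆ Set.Iio κ.ord := by
    intro α x hx
    rw [hA α] at hx
    exact hx.1
  have hBsub : ∀ α, B α ⊆ Set.Iio κ.ord := by
    intro α x hx
    rw [hB α] at hx
    exact hx.1
  refine ⟨?_, ?_, ?_⟩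
  · -- (1) disjointness
    intro α hα
    rw [Set.eq_empty_iff_forall_notMem]
    rintro ξ ⟨hξA, hξB⟩
    rw [hA α] at hξA
    rw [hB α] at hξB
    exact TwoCardinal.part1_core hκ hξA.2 hξB.2
  · -- (2) almost-inclusion
    intro α β hαβ hβ
    have hα : α < (Order.succ κ).ord := hαβ.trans hβ
    obtain ⟨W₀, hαW, hβW⟩ := TwoCardinal.exists_mem_pair (M := M) hα hβ
    set ζ := M.rank W₀ with hζ
    have hζκ : ζ < κ.ord := M.rank_lt_ord hκ W₀
    constructor
    · -- the A-side
      have hbad : ∀ ξ, ξ ∈ A α \ A β → ζ ≤ ξ →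
          (∃ Y : M.mu, M.wf.rank Y = Ordinal.lift.{1} ξ + 1 ∧ α ∈ (Y : Set Ordinal) ∧
            β ∈ (Y : Set Ordinal)) ∧
          (∃ Q : M.mu, M.wf.rank Q = Ordinal.lift.{1} ξ ∧ β ∈ (Q : Set Ordinal) ∧
            α ∉ (Q : Set Ordinal)) := by
        rintro ξ ⟨hξA, hξnB⟩ hζξ
        rw [hA α] at hξA
        obtain ⟨hξκ, X₁, X₂, X, hr1, hr2, hstar, hmem⟩ := hξA
        obtain ⟨Y₁, Y₂, Y, hry1, hry2, hystar, hwrY, hαY, hβY, hs1, hs2, hβside⟩ :=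
          TwoCardinal.transfer_level hκ hαW hβW hαβ hζξ hr1 hr2 hstar (Or.inl hmem)
        rcases hβside with hbs | hbs
        · exfalso
          apply hξnB
          rw [hA β]
          exact ⟨hξκ, Y₁, Y₂, Y, hry1, hry2, hystar, hbs⟩
        · exact ⟨⟨Y, hwrY, hαY, hβY⟩,
            ⟨Y₂, by rw [← M.lift_rank hκ, hry2], hbs.1, (hs1 hmem).2⟩⟩
      have hkey : ∀ ξ ξ', ξ ∈ A α \ A β → ζ ≤ ξ → ξ' ∈ A α \ A β → ζ ≤ ξ' → ξ < ξ' →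
          False := by
        intro ξ ξ' h1 hz1 h2 hz2 hlt
        obtain ⟨⟨Y, hwrY, hαY, hβY⟩, _⟩ := hbad ξ h1 hz1
        obtain ⟨_, ⟨Q, hwrQ, hβQ, hαQ⟩⟩ := hbad ξ' h2 hz2
        have hrle : M.wf.rank Y ≤ M.wf.rank Q := by
          rw [hwrY, hwrQ, Ordinal.add_one_eq_succ, Order.succ_le_iff]
          exact Ordinal.lift_lt.2 hlt
        exact hαQ (TwoCardinal.coherence (M := M) hrle ⟨hβY, hβQ⟩ ⟨hαY, hαβ⟩)
      by_cases hex : ∃ ξ₀, ξ₀ ∈ A α \ A β ∧ ζ ≤ ξ₀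
      · obtain ⟨ξ₀, hξ₀, hζξ₀⟩ := hex
        have hξ₀κ : ξ₀ < κ.ord := hAsub α hξ₀.1
        have hsub : A α \ A β ⊆ Set.Iio (max ζ (ξ₀ + 1)) := by
          intro x hx
          simp only [Set.mem_Iio]
          by_cases hc : ζ ≤ x
          · rcases lt_trichotomy x ξ₀ with h | h | h
            · exact (hkey x ξ₀ hx hc hξ₀ hζξ₀ h).elim
            · refine lt_max_iff.2 (Or.inr ?_)
              rw [h, Ordinal.add_one_eq_succ]
              exact Order.lt_succ ξ₀
            · exact (hkey ξ₀ x hξ₀ hζξ₀ hx hc h).elim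
          · push_neg at hc
            exact lt_max_iff.2 (Or.inl hc)
        have hγκ : max ζ (ξ₀ + 1) < κ.ord := by
          apply max_lt hζκ
          rw [Ordinal.add_one_eq_succ]
          exact (Cardinal.isSuccLimit_ord hκ.1).succ_lt hξ₀κ
        exact otp_card_lt hsub hγκ
      · push_neg at hex
        have hsub : A α \ A β ⊆ Set.Iio ζ := fun x hx => hex x hx
        exact otp_card_lt hsub hζκ
    · -- the B-side
      have hsub : B α \ B β ⊆ Set.Iio ζ := by
        rintro ξ ⟨hξB, hξnB⟩
        by_contra hc
        simp only [Set.mem_Iio, not_lt] at hc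
        rw [hB α] at hξB
        obtain ⟨hξκ, X₁, X₂, X, hr1, hr2, hstar, hmem⟩ := hξB
        obtain ⟨Y₁, Y₂, Y, hry1, hry2, hystar, hwrY, hαY, hβY, hs1, hs2, hβside⟩ :=
          TwoCardinal.transfer_level hκ hαW hβW hαβ hc hr1 hr2 hstar (Or.inr hmem)
        rcases hβside with hbs | hbs
        · exact absurd (hystar.2.2.2 β hbs α (hs2 hmem)) (not_lt.2 hαβ.le)
        · apply hξnB
          rw [hB β]
          exact ⟨hξκ, Y₁, Y₂, Y, hry1, hry2, hystar, hbs⟩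
      exact otp_card_lt hsub hζκ
  · -- (3) no interpolant
    rintro ⟨C, hC⟩
    have hbnd : ∀ α, α < (Order.succ κ).ord →
        ∃ η < κ.ord, (A α \ C) ∪ (B α ∩ C) ⊆ Set.Iio η := by
      intro α hα
      have hUsub : (A α \ C) ∪ (B α ∩ C) ⊆ Set.Iio κ.ord :=
        Set.union_subset (fun x hx => hAsub α hx.1) (fun x hx => hBsub α hx.1)
      apply bdd_of_card_lt hκ hUsub
      obtain ⟨h1, h2⟩ := hC α hα
      have hbddA : Bdd (A α \ C) := ⟨κ.ord, fun x hx => hAsub α hx.1⟩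
      have hbddB : Bdd (B α ∩ C) := ⟨κ.ord, fun x hx => hBsub α hx.1⟩
      have hUbdd : Bdd ((A α \ C) ∪ (B α ∩ C)) := ⟨κ.ord, hUsub⟩
      have hlift : Cardinal.lift.{1} ((otp ((A α \ C) ∪ (B α ∩ C))).card) <
          Cardinal.lift.{1} κ := by
        rw [card_otp hUbdd]
        calc #(((A α \ C) ∪ (B α ∩ C) : Set Ordinal) : Set Ordinal.{0}) ≤
            #((A α \ C : Set Ordinal) : Set Ordinal.{0}) +
              #((B α ∩ C : Set Ordinal) : Set Ordinal.{0}) := Cardinal.mk_union_le _ _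
        _ = Cardinal.lift.{1} ((otp (A α \ C)).card) +
            Cardinal.lift.{1} ((otp (B α ∩ C)).card) := by
            rw [card_otp hbddA, card_otp hbddB]
        _ = Cardinal.lift.{1} ((otp (A α \ C)).card + (otp (B α ∩ C)).card) := by
            rw [Cardinal.lift_add]
        _ < Cardinal.lift.{1} κ :=
            Cardinal.lift_lt.2 (Cardinal.add_lt_of_lt hκ.1 h1 h2)
      exact Cardinal.lift_lt.1 hlift
    set ηf : Ordinal → Ordinal := fun α =>
      if h : α < (Order.succ κ).ord then (hbnd α h).choose else 0 with hηf
    have hηfspec : ∀ α (h : α < (Order.succ κ).ord),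
        ηf α < κ.ord ∧ (A α \ C) ∪ (B α ∩ C) ⊆ Set.Iio (ηf α) := by
      intro α h
      simp only [hηf]
      rw [dif_pos h]
      exact ⟨(hbnd α h).choose_spec.1, (hbnd α h).choose_spec.2⟩
    set F : (Set.Iio ((Order.succ κ).ord) : Set Ordinal.{0}) →
        (Set.Iio (κ.ord) : Set Ordinal.{0}) := fun x => ⟨ηf x.1, (hηfspec x.1 x.2).1⟩ with hF
    have hcodcard : #((Set.Iio (κ.ord) : Set Ordinal.{0})) ≤ Cardinal.lift.{1} κ := by
      rw [Ordinal.mk_Iio_ordinal, Cardinal.card_ord]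
    have hdomcard : Cardinal.lift.{1} κ < #((Set.Iio ((Order.succ κ).ord) : Set Ordinal.{0})) := by
      rw [Ordinal.mk_Iio_ordinal, Cardinal.card_ord]
      exact Cardinal.lift_lt.2 (Order.lt_succ κ)
    obtain ⟨y, hy⟩ := exists_fiber_gt F (Cardinal.lift.{1} κ) hcodcard
      (Cardinal.aleph0_le_lift.2 hκ.1) hdomcard
    set T : Set Ordinal.{0} := Subtype.val '' (F ⁻¹' {y}) with hT
    have hTcard : Cardinal.lift.{1} κ < #(T : Set Ordinal.{0}) := by
      rw [hT, Cardinal.mk_image_eq Subtype.val_injective]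
      exact hy
    have hTmem : ∀ x ∈ T, x < (Order.succ κ).ord ∧ ηf x = (y : Ordinal) := by
      rintro x ⟨x', hx', rfl⟩
      have hxy : F x' = y := hx'
      exact ⟨x'.2, congrArg Subtype.val hxy⟩
    obtain ⟨T', hT'T, hT'card⟩ := Cardinal.le_mk_iff_exists_subset.1 hTcard.le
    have hT'b : ∃ b < (Order.succ κ).ord, T' ⊆ Set.Iio b := by
      apply bdd_of_card_lt (Cardinal.isRegular_succ hκ.1)
      · exact fun x hx => (hTmem x (hT'T hx)).1
      · have h1 : Cardinal.lift.{1} ((otp T').card) = Cardinal.lift.{1} κ := by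
          rw [card_otp ⟨(Order.succ κ).ord, fun x hx => (hTmem x (hT'T hx)).1⟩, hT'card]
        have h2 : (otp T').card = κ := Cardinal.lift_injective h1
        rw [h2]
        exact Order.lt_succ κ
    obtain ⟨bb, hbb, hT'bb⟩ := hT'b
    have hβex : ∃ β₀ ∈ T, bb ≤ β₀ := by
      by_contra hcon
      push_neg at hcon
      have hsubT : T ⊆ Set.Iio bb := fun x hx => hcon x hx
      have hle : #(T : Set Ordinal.{0}) ≤ #((Set.Iio bb : Set Ordinal.{0})) :=
        Cardinal.mk_le_mk_of_subset hsubT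
      rw [Ordinal.mk_Iio_ordinal] at hle
      have hcard : bb.card ≤ κ := Order.lt_succ_iff.1 (Cardinal.lt_ord.1 hbb)
      exact absurd (hTcard.trans_le (hle.trans (Cardinal.lift_le.2 hcard))) (lt_irrefl _)
    obtain ⟨β₀, hβ₀T, hbbβ₀⟩ := hβex
    obtain ⟨hβ₀κ, hηβ₀⟩ := hTmem β₀ hβ₀T
    have hT'sub : T' ⊆ T ∩ Set.Iio β₀ := fun x hx =>
      ⟨hT'T hx, lt_of_lt_of_le (hT'bb hx) hbbβ₀⟩
    obtain ⟨X₀, hX₀mem, hX₀rank⟩ := TwoCardinal.exists_high_rank (M := M) hκ y.2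
    obtain ⟨W₁, hW₁⟩ := TwoCardinal.exists_mem (M := M) hβ₀κ
    obtain ⟨Vs, hVsmem, hXVs, hWVs⟩ :=
      M.directed (X₀ : Set Ordinal) X₀.2 (W₁ : Set Ordinal) W₁.2
    set V : M.mu := ⟨Vs, hVsmem⟩ with hV
    have hβ₀V : β₀ ∈ (V : Set Ordinal) := hWVs hW₁
    have hrankV : (y : Ordinal) ≤ M.rank V :=
      le_trans hX₀rank ((M.rank_le_iff hκ).2 (M.wfRank_le_of_subset hXVs))
    have hα₀ex : ∃ a ∈ T ∩ Set.Iio β₀, a ∉ (V : Set Ordinal) := by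
      by_contra hcon
      push_neg at hcon
      have hsub2 : T' ⊆ (V : Set Ordinal) := fun x hx => hcon x (hT'sub hx)
      have hle2 : Cardinal.lift.{1} κ ≤ #((V : Set Ordinal) : Set Ordinal.{0}) := by
        rw [← hT'card]
        exact Cardinal.mk_le_mk_of_subset hsub2
      exact absurd (hle2.trans_lt (TwoCardinal.card_coe_lt V)) (lt_irrefl _)
    obtain ⟨α₀, ⟨hα₀T, hα₀β₀⟩, hα₀V⟩ := hα₀ex
    obtain ⟨hα₀κ, hηα₀⟩ := hTmem α₀ hα₀T
    have hcommon : ∀ W : M.mu, α₀ ∈ (W : Set Ordinal) → β₀ ∈ (W : Set Ordinal) →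
        M.wf.rank V < M.wf.rank W := by
      intro W hαWW hβWW
      by_contra hcon
      push_neg at hcon
      exact hα₀V (TwoCardinal.coherence (M := M) hcon ⟨hβWW, hβ₀V⟩ ⟨hαWW, hα₀β₀⟩)
    have hRSne : {r : Ordinal.{1} | ∃ W : M.mu, M.wf.rank W = r ∧ α₀ ∈ (W : Set Ordinal) ∧
        β₀ ∈ (W : Set Ordinal)}.Nonempty := by
      obtain ⟨W, h1, h2⟩ := TwoCardinal.exists_mem_pair (M := M) (hα₀β₀.trans hβ₀κ) hβ₀κ
      exact ⟨_, W, rfl, h1, h2⟩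
    obtain ⟨Z, hZrank, hαZ, hβZ⟩ := csInf_mem hRSne
    have hZmin : ∀ W : M.mu, α₀ ∈ (W : Set Ordinal) → β₀ ∈ (W : Set Ordinal) →
        M.wf.rank Z ≤ M.wf.rank W := by
      intro W h1 h2
      rw [hZrank]
      exact csInf_le' ⟨W, rfl, h1, h2⟩
    have hZV : M.wf.rank V < M.wf.rank Z := hcommon Z hαZ hβZ
    have hZ0 : M.wf.rank Z ≠ 0 := by
      intro h
      rw [h] at hZV
      exact absurd hZV (zero_le : (0 : Ordinal) ≤ M.wf.rank V).not_gt
    obtain ⟨Z₁, Z₂, hsp, hαmem, hβmem⟩ :=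
      TwoCardinal.min_split hα₀β₀ Z hαZ hβZ hZmin hZ0
    have hξκ : M.rank Z₁ < κ.ord := M.rank_lt_ord hκ Z₁
    have hηξ : (y : Ordinal) ≤ M.rank Z₁ := by
      have h1 : M.wf.rank V ≤ M.wf.rank Z₁ := by
        have h2 := hZV
        rw [hsp.rank_eq, Ordinal.add_one_eq_succ, Order.lt_succ_iff] at h2
        exact h2
      have h2 : Ordinal.lift.{1} (y : Ordinal) ≤ M.wf.rank V := by
        rw [← M.lift_rank hκ]
        exact Ordinal.lift_le.2 hrankV
      have h3 := h2.trans h1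
      rw [← M.lift_rank hκ (X := Z₁)] at h3
      exact Ordinal.lift_le.1 h3
    have hr2 : M.rank Z₂ = M.rank Z₁ := ((M.rank_eq_iff hκ).2 hsp.1).symm
    have hξA : M.rank Z₁ ∈ A α₀ := by
      rw [hA α₀]
      exact ⟨hξκ, Z₁, Z₂, Z, rfl, hr2, hsp.2.1, hαmem⟩
    have hξB : M.rank Z₁ ∈ B β₀ := by
      rw [hB β₀]
      exact ⟨hξκ, Z₁, Z₂, Z, rfl, hr2, hsp.2.1, hβmem⟩
    have hC1 : M.rank Z₁ ∈ C := by
      by_contra hc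
      have hmem : M.rank Z₁ ∈ (A α₀ \ C) ∪ (B α₀ ∩ C) := Or.inl ⟨hξA, hc⟩
      have hlt := (hηfspec α₀ hα₀κ).2 hmem
      rw [hηα₀] at hlt
      exact absurd hlt (not_lt.2 hηξ)
    have hC2 : M.rank Z₁ ∉ C := by
      intro hc
      have hmem : M.rank Z₁ ∈ (A β₀ \ C) ∪ (B β₀ ∩ C) := Or.inr ⟨hξB, hc⟩
      have hlt := (hηfspec β₀ hβ₀κ).2 hmem
      rw [hηβ₀] at hlt
      exact absurd hlt (not_lt.2 hηξ)
    exact hC2 hC1
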